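/- arXiv:1706.09260 — 4 statements merged into one kernel-verified Lean document; each statement's English description precedes it below -/
import Mathlib

section
/- Let ϑ ≥ 2π. There exists a constant κ₀ ≥ 1 such that for all real a, b with |a| ≤ ϑ and ϑ^{-1} ≤ b ≤ ϑ, all complex λ with Re λ ≥ 1, and all h in the periodic Sobolev space H^2(𝕊) (complex valued): κ₀ ‖(λ - 𝔸_{a,b})h‖_{H^1(𝕊)} ≥ |λ|·‖h‖_{H^1(𝕊)} + ‖h‖_{H^2(𝕊)}, where 𝔸_{a,b} := a ∂_x - b (-∂_x²)^{1/2} is the Fourier multiplier with symbol i·a·m - b·|m|, m ∈ ℤ. -/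
open Real

/-- The squared Sobolev norm of order `r` of a sequence of Fourier coefficients. -/
noncomputable def HSobNormSq (r : ℝ) (c : ℤ → ℂ) : ℝ :=
  ∑' m : ℤ, (1 + (m : ℝ) ^ 2) ^ r * ‖c m‖ ^ 2

/-- Membership in the periodic Sobolev space `H^r(𝕊)`, in terms of Fourier coefficients. -/
def MemHSob (r : ℝ) (c : ℤ → ℂ) : Prop :=
  Summable fun m : ℤ => (1 + (m : ℝ) ^ 2) ^ r * ‖c m‖ ^ 2

set_option maxHeartbeats 1000000

lemma key_real (ϑ a b x y m : ℝ) (hϑ : 1 ≤ ϑ) (ha : |a| ≤ ϑ) (hb : ϑ⁻¹ ≤ b) (hx : 1 ≤ x) :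
    2*(x^2+y^2) + 2*(1+m^2) ≤ (3*(1+ϑ^2))^2 * ((x + b*|m|)^2 + (y - a*m)^2) := by
  have hϑ0 : (0:ℝ) < ϑ := by linarith
  have hb0 : 0 < b := lt_of_lt_of_le (inv_pos.mpr hϑ0) hb
  have hm0 : 0 ≤ |m| := abs_nonneg m
  set R := x + b*|m| with hR
  set I := y - a*m with hI
  have hR1 : 1 ≤ R := by have := mul_nonneg hb0.le hm0; simp only [hR]; linarith
  have hmR : |m| ≤ ϑ * R := by
    have h1 : |m| ≤ ϑ * (b * |m|) := by
      have : 1 ≤ ϑ * b := by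
        have := (inv_le_iff_one_le_mul₀' hϑ0).mp hb
        linarith [mul_comm b ϑ]
      nlinarith
    nlinarith
  have hyI : |y| ≤ |I| + ϑ * |m| := by
    have : |y| ≤ |I| + |a*m| := by
      calc |y| = |I + a*m| := by rw [hI]; ring_nf
      _ ≤ |I| + |a*m| := abs_add_le _ _
    have : |a*m| ≤ ϑ * |m| := by rw [abs_mul]; exact mul_le_mul_of_nonneg_right ha hm0
    linarith [abs_add_le I (a*m), abs_sub_abs_le_abs_sub y (a*m)]
  have hx2 : x^2 ≤ R^2 := by nlinarith [mul_nonneg hb0.le hm0]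
  have hm2 : m^2 ≤ ϑ^2 * R^2 := by nlinarith [abs_nonneg m, sq_abs m]
  have hy2 : y^2 ≤ 2*I^2 + 2*ϑ^2*m^2 := by nlinarith [sq_abs y, sq_abs I, sq_abs m, sq_nonneg (|I| - ϑ*|m|), abs_nonneg y, abs_nonneg I, mul_nonneg hϑ0.le hm0]
  nlinarith [sq_nonneg I, sq_nonneg R, sq_nonneg ϑ, sq_nonneg (ϑ^2), mul_le_mul_of_nonneg_left hm2 (by positivity : (0:ℝ) ≤ 2*ϑ^2)]

/-- Uniform resolvent estimate for the Fourier multipliers `𝔸_{a,b} = a∂_x - b(-∂_x²)^{1/2}`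
with symbol `i·a·m - b·|m|`: for `ϑ ≥ 2π` there is `κ₀ ≥ 1` such that for all `|a| ≤ ϑ`,
`ϑ⁻¹ ≤ b ≤ ϑ`, `Re λ ≥ 1` and `h ∈ H²(𝕊)`,
`κ₀‖(λ - 𝔸_{a,b})h‖_{H¹} ≥ |λ|‖h‖_{H¹} + ‖h‖_{H²}`. -/
theorem uniform_resolvent_estimate (ϑ : ℝ) (hϑ : 2 * π ≤ ϑ) :
    ∃ κ₀ : ℝ, 1 ≤ κ₀ ∧
      ∀ a b : ℝ, |a| ≤ ϑ → ϑ⁻¹ ≤ b → b ≤ ϑ →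
      ∀ l : ℂ, 1 ≤ l.re → ∀ c : ℤ → ℂ, MemHSob 2 c →
        κ₀ * Real.sqrt (HSobNormSq 1 (fun m =>
            (l - (Complex.I * a * m - b * |(m : ℝ)|)) * c m)) ≥
          ‖l‖ * Real.sqrt (HSobNormSq 1 c) + Real.sqrt (HSobNormSq 2 c) := by
  have hϑ1 : 1 ≤ ϑ := by nlinarith [Real.pi_gt_three]
  set K : ℝ := 3 * (1 + ϑ^2) with hK
  have hK1 : 1 ≤ K := by nlinarith
  have hK0 : 0 ≤ K := by linarith
  refine ⟨K, hK1, fun a b ha hb1 hb2 l hl c hc => ?_⟩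
  -- abbreviations
  set σ : ℤ → ℂ := fun m => Complex.I * a * m - b * |(m : ℝ)| with hσ
  -- pointwise norm computation
  have hnorm : ∀ m : ℤ, ‖l - σ m‖^2 = (l.re + b*|(m:ℝ)|)^2 + (l.im - a*m)^2 := by
    intro m
    have hre : (l - σ m).re = l.re + b * |(m:ℝ)| := by simp [hσ]
    have him : (l - σ m).im = l.im - a * m := by simp [hσ]
    rw [Complex.sq_norm, Complex.normSq_apply, hre, him]; ring
  have hbase : ∀ m : ℤ, (1:ℝ) ≤ 1 + (m:ℝ)^2 := fun m => by nlinarith [sq_nonneg ((m:ℝ))]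
  -- summability facts
  have hc2 : Summable fun m : ℤ => (1 + (m:ℝ)^2)^2 * ‖c m‖^2 := by
    have := hc
    unfold MemHSob at this
    simpa [Real.rpow_two] using this
  have hc1 : Summable fun m : ℤ => (1 + (m:ℝ)^2) * ‖c m‖^2 := by
    refine Summable.of_nonneg_of_le (fun m => by positivity) (fun m => ?_) hc2
    have h := hbase m
    nlinarith [mul_le_mul_of_nonneg_right (by nlinarith : (1+(m:ℝ)^2) ≤ (1+(m:ℝ)^2)^2) (sq_nonneg ‖c m‖)]
  have hσbd : ∀ m : ℤ, ‖l - σ m‖^2 ≤ 2*‖l‖^2 + 4*ϑ^2*(1 + (m:ℝ)^2) := by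
    intro m
    rw [hnorm m]
    have h1 : (l.re + b*|(m:ℝ)|)^2 ≤ 2*l.re^2 + 2*b^2*(m:ℝ)^2 := by
      nlinarith [sq_nonneg (l.re - b*|(m:ℝ)|), sq_abs (m:ℝ)]
    have h2 : (l.im - a*(m:ℝ))^2 ≤ 2*l.im^2 + 2*a^2*(m:ℝ)^2 := by
      nlinarith [sq_nonneg (l.im + a*(m:ℝ))]
    have hln : ‖l‖^2 = l.re^2 + l.im^2 := by
      rw [Complex.sq_norm, Complex.normSq_apply]; ring
    have ha2 : a^2 ≤ ϑ^2 := by nlinarith [sq_abs a, abs_nonneg a]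
    have hb2' : b^2 ≤ ϑ^2 := by nlinarith [lt_of_lt_of_le (inv_pos.mpr (by linarith : (0:ℝ) < ϑ)) hb1]
    nlinarith [sq_nonneg (m:ℝ)]
  have hw : Summable fun m : ℤ => (1 + (m:ℝ)^2) * ‖(l - σ m) * c m‖^2 := by
    refine Summable.of_nonneg_of_le (fun m => by positivity) (fun m => ?_)
      ((hc2.mul_left (2*‖l‖^2)).add (hc2.mul_left (4*ϑ^2)))
    have hb' := hbase m
    have hs := hσbd m
    have hcm : (0:ℝ) ≤ ‖c m‖^2 := by positivity
    rw [norm_mul, mul_pow]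
    nlinarith [sq_nonneg ‖l‖, sq_nonneg ϑ, sq_nonneg (1+(m:ℝ)^2), mul_le_mul_of_nonneg_right hs hcm, mul_le_mul_of_nonneg_left hb' (mul_nonneg (by positivity : (0:ℝ) ≤ 2*‖l‖^2) hcm)]
  -- rewrite all HSobNormSq in rpow-free form
  have e1 : HSobNormSq 1 c = ∑' m : ℤ, (1 + (m:ℝ)^2) * ‖c m‖^2 := by
    unfold HSobNormSq; simp [Real.rpow_one]
  have e2 : HSobNormSq 2 c = ∑' m : ℤ, (1 + (m:ℝ)^2)^2 * ‖c m‖^2 := by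
    unfold HSobNormSq; simp [Real.rpow_two]
  have ew : HSobNormSq 1 (fun m => (l - σ m) * c m)
      = ∑' m : ℤ, (1 + (m:ℝ)^2) * ‖(l - σ m) * c m‖^2 := by
    unfold HSobNormSq; simp [Real.rpow_one]
  set S1 := ∑' m : ℤ, (1 + (m:ℝ)^2) * ‖c m‖^2 with hS1
  set S2 := ∑' m : ℤ, (1 + (m:ℝ)^2)^2 * ‖c m‖^2 with hS2
  set W := ∑' m : ℤ, (1 + (m:ℝ)^2) * ‖(l - σ m) * c m‖^2 with hW
  have hS1nn : 0 ≤ S1 := tsum_nonneg fun m => by positivity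
  have hS2nn : 0 ≤ S2 := tsum_nonneg fun m => by positivity
  have hWnn : 0 ≤ W := tsum_nonneg fun m => by positivity
  -- main tsum inequality
  have hmain : 2*‖l‖^2 * S1 + 2 * S2 ≤ K^2 * W := by
    rw [hS1, hS2, hW, ← tsum_mul_left, ← tsum_mul_left, ← tsum_mul_left,
      ← Summable.tsum_add (hc1.mul_left _) (hc2.mul_left _)]
    refine Summable.tsum_le_tsum (fun m => ?_) ((hc1.mul_left _).add (hc2.mul_left _)) (hw.mul_left _)
    have hkey := key_real ϑ a b l.re l.im (m:ℝ) hϑ1 ha hb1 hl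
    have hln : ‖l‖^2 = l.re^2 + l.im^2 := by
      rw [Complex.sq_norm, Complex.normSq_apply]; ring
    have hcm : (0:ℝ) ≤ ‖c m‖^2 := by positivity
    have hb' := hbase m
    have hprod : ‖(l - σ m) * c m‖^2
        = ((l.re + b*|(m:ℝ)|)^2 + (l.im - a*(m:ℝ))^2) * ‖c m‖^2 := by
      rw [norm_mul, mul_pow, hnorm m]
    calc 2*‖l‖^2 * ((1 + (m:ℝ)^2) * ‖c m‖^2) + 2 * ((1 + (m:ℝ)^2)^2 * ‖c m‖^2)
        = (2*(l.re^2+l.im^2) + 2*(1+(m:ℝ)^2)) * ((1 + (m:ℝ)^2) * ‖c m‖^2) := by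
          rw [hln]; ring
      _ ≤ ((3*(1+ϑ^2))^2 * ((l.re + b*|(m:ℝ)|)^2 + (l.im - a*(m:ℝ))^2)) * ((1 + (m:ℝ)^2) * ‖c m‖^2) := by
          exact mul_le_mul_of_nonneg_right hkey (by positivity)
      _ = K^2 * ((1 + (m:ℝ)^2) * ‖(l - σ m) * c m‖^2) := by
          rw [hprod, hK]; ring
  -- finish with square roots
  rw [ge_iff_le, e1, e2, ew]
  have hKW : K * Real.sqrt W = Real.sqrt (K^2 * W) := by
    rw [Real.sqrt_mul (sq_nonneg K), Real.sqrt_sq hK0]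
  rw [hKW]
  have h1 : ‖l‖ * Real.sqrt S1 + Real.sqrt S2 ≤ Real.sqrt (2*‖l‖^2 * S1 + 2 * S2) := by
    rw [← Real.sqrt_sq (by positivity : (0:ℝ) ≤ ‖l‖), ← Real.sqrt_mul (by positivity)]
    have hx := Real.sqrt_nonneg (‖l‖^2 * S1)
    have hy := Real.sqrt_nonneg S2
    have hx2 : Real.sqrt (‖l‖^2*S1)^2 = ‖l‖^2*S1 := Real.sq_sqrt (by positivity)
    have hy2 : Real.sqrt S2 ^2 = S2 := Real.sq_sqrt hS2nn
    rw [show Real.sqrt (‖l‖^2*S1) + Real.sqrt S2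
        = Real.sqrt ((Real.sqrt (‖l‖^2*S1) + Real.sqrt S2)^2) from
      (Real.sqrt_sq (by positivity)).symm]
    apply Real.sqrt_le_sqrt
    have hz : Real.sqrt (‖l‖^2)^2 = ‖l‖^2 := Real.sq_sqrt (sq_nonneg _)
    nlinarith [sq_nonneg (Real.sqrt (‖l‖^2*S1) - Real.sqrt S2)]
  exact le_trans h1 (Real.sqrt_le_sqrt hmain)
end

section
/- Let ϑ ≥ 2π, let a, b ∈ ℝ with |a| ≤ ϑ and ϑ^{-1} ≤ b ≤ ϑ, and let λ ∈ ℂ with Re λ ≥ 1. Then λ - 𝔸_{a,b} is an isomorphism from H^2(𝕊) onto H^1(𝕊), where 𝔸_{a,b} = a ∂_x - b (-∂_x²)^{1/2} is the Fourier multiplier with symbol i·a·m - b·|m|. -/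
open Real

set_option maxHeartbeats 2000000 in
/-- For `ϑ ≥ 2π`, `|a| ≤ ϑ`, `ϑ⁻¹ ≤ b ≤ ϑ` and `Re λ ≥ 1`, the operator `λ - 𝔸_{a,b}`,
where `𝔸_{a,b}` is the Fourier multiplier with symbol `i·a·m - b·|m|`, is an isomorphism
from `H²(𝕊)` onto `H¹(𝕊)`: it maps `H²` into `H¹`, is bijective onto `H¹`, and both it
and its inverse are bounded. -/
theorem lambda_sub_multiplier_isomorphism (ϑ : ℝ) (hϑ : 2 * π ≤ ϑ)
    (a b : ℝ) (ha : |a| ≤ ϑ) (hb1 : ϑ⁻¹ ≤ b) (hb2 : b ≤ ϑ)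
    (l : ℂ) (hl : 1 ≤ l.re) :
    (∀ c : ℤ → ℂ, MemHSob 2 c →
        MemHSob 1 (fun m => (l - (Complex.I * a * m - b * |(m : ℝ)|)) * c m)) ∧
    (∀ d : ℤ → ℂ, MemHSob 1 d →
        ∃! c : ℤ → ℂ, MemHSob 2 c ∧
          ∀ m : ℤ, (l - (Complex.I * a * m - b * |(m : ℝ)|)) * c m = d m) ∧
    ∃ C : ℝ, 0 < C ∧
      (∀ c : ℤ → ℂ, MemHSob 2 c →
        Real.sqrt (HSobNormSq 1 (fun m =>
            (l - (Complex.I * a * m - b * |(m : ℝ)|)) * c m)) ≤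
          C * Real.sqrt (HSobNormSq 2 c)) ∧
      (∀ c : ℤ → ℂ, MemHSob 2 c →
        Real.sqrt (HSobNormSq 2 c) ≤
          C * Real.sqrt (HSobNormSq 1 (fun m =>
            (l - (Complex.I * a * m - b * |(m : ℝ)|)) * c m))) := by
  have hϑ0 : (0:ℝ) < ϑ := lt_of_lt_of_le (by positivity) hϑ
  have hϑ1 : (1:ℝ) ≤ ϑ := by nlinarith [Real.pi_gt_three]
  have htinv : (0:ℝ) < ϑ⁻¹ := by positivity
  have htinv1 : ϑ⁻¹ ≤ 1 := by
    rw [inv_le_one_iff₀]; right; exact hϑ1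
  have hinv : ϑ⁻¹ * ϑ = 1 := inv_mul_cancel₀ hϑ0.ne'
  set σ : ℤ → ℂ := fun m => l - (Complex.I * a * m - b * |(m : ℝ)|) with hσdef
  set K : ℝ := 2 * (‖l‖ + ϑ) with hKdef
  have hK0 : 0 < K := by have := norm_nonneg l; positivity
  have hnormsq : ∀ m : ℤ,
      ‖σ m‖ ^ 2 = (l.re + b * |(m:ℝ)|) ^ 2 + (l.im - a * m) ^ 2 := by
    intro m
    rw [hσdef]
    rw [Complex.sq_norm, Complex.normSq_apply]
    simp [Complex.sub_re, Complex.sub_im, Complex.mul_re, Complex.mul_im]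
    ring
  have hre : ∀ m : ℤ, (σ m).re = l.re + b * |(m:ℝ)| := by
    intro m
    rw [hσdef]
    simp [Complex.sub_re, Complex.mul_re]
  have hrepos : ∀ m : ℤ, 1 + ϑ⁻¹ * |(m:ℝ)| ≤ (σ m).re := by
    intro m
    rw [hre m]
    have h1 : ϑ⁻¹ * |(m:ℝ)| ≤ b * |(m:ℝ)| :=
      mul_le_mul_of_nonneg_right hb1 (abs_nonneg _)
    linarith
  have hne : ∀ m : ℤ, σ m ≠ 0 := by
    intro m h
    have h1 := hrepos m
    rw [h] at h1
    simp at h1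
    nlinarith [abs_nonneg ((m:ℝ))]
  have hlow : ∀ m : ℤ, ϑ⁻¹ ^ 2 * (1 + (m:ℝ) ^ 2) ≤ ‖σ m‖ ^ 2 := by
    intro m
    have h1 := hrepos m
    rw [hre m] at h1
    rw [hnormsq m]
    have habs : |(m:ℝ)| ^ 2 = (m:ℝ) ^ 2 := sq_abs _
    nlinarith [sq_nonneg (l.im - a * m), abs_nonneg ((m:ℝ)),
      mul_le_mul_of_nonneg_left h1 (le_of_lt htinv),
      mul_le_mul_of_nonneg_left h1 (mul_nonneg htinv.le (abs_nonneg ((m:ℝ)))),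
      sq_nonneg (ϑ⁻¹ - 1), sq_nonneg (1 + ϑ⁻¹ * |(m:ℝ)|), mul_pos htinv htinv]
  have hup : ∀ m : ℤ, ‖σ m‖ ^ 2 ≤ K ^ 2 * (1 + (m:ℝ) ^ 2) := by
    intro m
    rw [hnormsq m, hKdef]
    have habs : |(m:ℝ)| ^ 2 = (m:ℝ) ^ 2 := sq_abs _
    have h1 : |l.re| ≤ ‖l‖ := Complex.abs_re_le_norm l
    have h2 : |l.im| ≤ ‖l‖ := Complex.abs_im_le_norm l
    have h3 : -‖l‖ ≤ l.re ∧ l.re ≤ ‖l‖ := abs_le.mp h1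
    have h4 : -‖l‖ ≤ l.im ∧ l.im ≤ ‖l‖ := abs_le.mp h2
    have h5 : |a * (m:ℝ)| ≤ ϑ * |(m:ℝ)| := by
      rw [abs_mul]
      exact mul_le_mul_of_nonneg_right ha (abs_nonneg _)
    have h6 := abs_le.mp h5
    have hb0 : 0 < b := lt_of_lt_of_le htinv hb1
    have hm0 : (0:ℝ) ≤ |(m:ℝ)| := abs_nonneg _
    have hL0 : (0:ℝ) ≤ ‖l‖ := norm_nonneg l
    have hl1 : l.re ^ 2 ≤ ‖l‖ ^ 2 := sq_le_sq' h3.1 h3.2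
    have hl2 : l.im ^ 2 ≤ ‖l‖ ^ 2 := sq_le_sq' h4.1 h4.2
    have ha2 : a ^ 2 ≤ ϑ ^ 2 := by nlinarith [sq_abs a, abs_nonneg a]
    have hbq : b ^ 2 ≤ ϑ ^ 2 := by nlinarith
    have ham : (a * (m:ℝ)) ^ 2 ≤ ϑ ^ 2 * (m:ℝ) ^ 2 := by
      nlinarith [mul_le_mul_of_nonneg_right ha2 (sq_nonneg ((m:ℝ)))]
    have hbm : (b * |(m:ℝ)|) ^ 2 ≤ ϑ ^ 2 * (m:ℝ) ^ 2 := by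
      nlinarith [mul_le_mul_of_nonneg_right hbq (sq_nonneg ((m:ℝ)))]
    have p1 : (l.re + b * |(m:ℝ)|) ^ 2 ≤ 2 * ‖l‖ ^ 2 + 2 * (ϑ ^ 2 * (m:ℝ) ^ 2) := by
      nlinarith [sq_nonneg (l.re - b * |(m:ℝ)|)]
    have p2 : (l.im - a * (m:ℝ)) ^ 2 ≤ 2 * ‖l‖ ^ 2 + 2 * (ϑ ^ 2 * (m:ℝ) ^ 2) := by
      nlinarith [sq_nonneg (l.im + a * (m:ℝ))]
    have p3 : 4 * ‖l‖ ^ 2 + 4 * (ϑ ^ 2 * (m:ℝ) ^ 2) ≤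
        (2 * (‖l‖ + ϑ)) ^ 2 * (1 + (m:ℝ) ^ 2) := by
      nlinarith [mul_nonneg hL0 hϑ0.le, sq_nonneg ((m:ℝ)),
        mul_nonneg (mul_nonneg hL0 hϑ0.le) (sq_nonneg ((m:ℝ))),
        mul_nonneg (mul_nonneg hL0 hL0) (sq_nonneg ((m:ℝ))), mul_pos hϑ0 hϑ0]
    push_cast at p2 ⊢
    linarith
  have hlow' : ∀ m : ℤ, 1 + (m:ℝ) ^ 2 ≤ ϑ ^ 2 * ‖σ m‖ ^ 2 := by
    intro m
    have h := mul_le_mul_of_nonneg_left (hlow m) (sq_nonneg ϑ)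
    have e : ϑ ^ 2 * (ϑ⁻¹ ^ 2 * (1 + (m:ℝ) ^ 2)) = 1 + (m:ℝ) ^ 2 := by
      rw [← mul_assoc, ← mul_pow, mul_inv_cancel₀ hϑ0.ne']; ring
    rw [e] at h
    exact h
  -- rewrite rpow with natural exponents
  have hpow1 : ∀ x : ℝ, x ^ (1:ℝ) = x := fun x => Real.rpow_one x
  have hpow2 : ∀ x : ℝ, x ^ (2:ℝ) = x ^ (2:ℕ) := by
    intro x
    rw [show (2:ℝ) = ((2:ℕ):ℝ) by norm_num, Real.rpow_natCast]
  -- forward bound on terms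
  have hterm : ∀ (c : ℤ → ℂ) (m : ℤ),
      (1 + (m:ℝ) ^ 2) ^ (1:ℝ) * ‖σ m * c m‖ ^ 2 ≤
        K ^ 2 * ((1 + (m:ℝ) ^ 2) ^ (2:ℝ) * ‖c m‖ ^ 2) := by
    intro c m
    rw [hpow1, hpow2, norm_mul, mul_pow]
    have h1 : (0:ℝ) ≤ ‖c m‖ ^ 2 := sq_nonneg _
    have h2 : (0:ℝ) < 1 + (m:ℝ) ^ 2 := by positivity
    nlinarith [hup m, mul_le_mul_of_nonneg_right (hup m) (mul_nonneg h2.le h1)]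
  have key1 : ∀ c : ℤ → ℂ, MemHSob 2 c → MemHSob 1 (fun m => σ m * c m) := by
    intro c hc
    exact Summable.of_nonneg_of_le (fun m => by positivity) (hterm c) (hc.mul_left (K ^ 2))
  have key1' : ∀ c : ℤ → ℂ, MemHSob 2 c →
      HSobNormSq 1 (fun m => σ m * c m) ≤ K ^ 2 * HSobNormSq 2 c := by
    intro c hc
    rw [HSobNormSq, HSobNormSq, ← tsum_mul_left]
    exact Summable.tsum_le_tsum (hterm c) (key1 c hc) (hc.mul_left (K ^ 2))
  -- backward bound on terms
  have hterm2 : ∀ (c : ℤ → ℂ) (m : ℤ),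
      (1 + (m:ℝ) ^ 2) ^ (2:ℝ) * ‖c m‖ ^ 2 ≤
        ϑ ^ 2 * ((1 + (m:ℝ) ^ 2) ^ (1:ℝ) * ‖σ m * c m‖ ^ 2) := by
    intro c m
    rw [hpow1, hpow2, norm_mul, mul_pow]
    have h1 : (0:ℝ) ≤ ‖c m‖ ^ 2 := sq_nonneg _
    have h2 : (0:ℝ) < 1 + (m:ℝ) ^ 2 := by positivity
    have h3 := mul_le_mul_of_nonneg_right (hlow' m) (mul_nonneg h2.le h1)
    nlinarith [h3]
  have key2 : ∀ c : ℤ → ℂ, MemHSob 2 c →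
      HSobNormSq 2 c ≤ ϑ ^ 2 * HSobNormSq 1 (fun m => σ m * c m) := by
    intro c hc
    rw [HSobNormSq, HSobNormSq, ← tsum_mul_left]
    exact Summable.tsum_le_tsum (hterm2 c) hc ((key1 c hc).mul_left (ϑ ^ 2))
  refine ⟨key1, ?_, ?_⟩
  · -- existence and uniqueness of preimages
    intro d hd
    refine ⟨fun m => d m / σ m, ⟨?_, fun m => by
      rw [mul_comm]; exact div_mul_cancel₀ (d m) (hne m)⟩, ?_⟩
    · -- MemHSob 2
      have hbnd : ∀ m : ℤ, (1 + (m:ℝ) ^ 2) ^ (2:ℝ) * ‖d m / σ m‖ ^ 2 ≤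
          ϑ ^ 2 * ((1 + (m:ℝ) ^ 2) ^ (1:ℝ) * ‖d m‖ ^ 2) := ?_
      · exact Summable.of_nonneg_of_le (fun m => by positivity) hbnd (hd.mul_left (ϑ ^ 2))
      intro m
      rw [hpow1, hpow2, norm_div, div_pow]
      have hσ2 : (0:ℝ) < ‖σ m‖ ^ 2 := by
        have := norm_pos_iff.mpr (hne m); positivity
      rw [← mul_div_assoc, div_le_iff₀ hσ2]
      have h1 : (0:ℝ) ≤ ‖d m‖ ^ 2 := sq_nonneg _
      have h2 : (0:ℝ) < 1 + (m:ℝ) ^ 2 := by positivity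
      have h3 := mul_le_mul_of_nonneg_right (hlow' m) (mul_nonneg h2.le h1)
      nlinarith [h3]
    · rintro c' ⟨-, hc'⟩
      funext m
      have h1 : σ m * c' m = σ m * (d m / σ m) := by
        rw [hc' m, mul_comm, div_mul_cancel₀ (d m) (hne m)]
      exact mul_left_cancel₀ (hne m) h1
  · -- the constant
    refine ⟨K + ϑ, by positivity, ?_, ?_⟩
    · intro c hc
      have h1 := Real.sqrt_le_sqrt (key1' c hc)
      rw [Real.sqrt_mul (sq_nonneg K), Real.sqrt_sq hK0.le] at h1
      have h2 : K * Real.sqrt (HSobNormSq 2 c) ≤ (K + ϑ) * Real.sqrt (HSobNormSq 2 c) :=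
        mul_le_mul_of_nonneg_right (by linarith) (Real.sqrt_nonneg _)
      linarith
    · intro c hc
      have h1 := Real.sqrt_le_sqrt (key2 c hc)
      rw [Real.sqrt_mul (sq_nonneg ϑ), Real.sqrt_sq hϑ0.le] at h1
      have h2 : ϑ * Real.sqrt (HSobNormSq 1 fun m => σ m * c m) ≤
          (K + ϑ) * Real.sqrt (HSobNormSq 1 fun m => σ m * c m) :=
        mul_le_mul_of_nonneg_right (by linarith) (Real.sqrt_nonneg _)
      linarith
end

section
/- Let f ∈ H^s(𝕊) with s ∈ (3/2, 2) and set α := s/2 - 3/4 ∈ (0, 1/4). Define φ₆(f)(x) := PV ∫_{-π}^{π} (1/s) · 1/(1 + ((f(x) - f(x-s))/s)²) ds. Then φ₆(f) is well-defined (the principal value at s = 0 exists for every x), is 2π-periodic, and belongs to the Hölder space C^α(𝕊); moreover sup_{τ ∈ [0,1]} ‖φ₆(τ f)‖_{C^α} < ∞. -/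
open MeasureTheory Filter Real

/-- The `m`-th Fourier coefficient of a `2π`-periodic function `f : ℝ → ℝ`. -/
noncomputable def periodicFourierCoeff (f : ℝ → ℝ) (m : ℤ) : ℂ :=
  (1 / (2 * π)) * ∫ t in (-π)..π, (f t : ℂ) * Complex.exp (-Complex.I * m * t)

/-- `f` belongs to the periodic Sobolev space `H^s(𝕊)`. -/
def MemHPer (s : ℝ) (f : ℝ → ℝ) : Prop :=
  Function.Periodic f (2 * π) ∧
    Summable fun m : ℤ => (1 + (m : ℝ) ^ 2) ^ s * ‖periodicFourierCoeff f m‖ ^ 2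

open scoped ENNReal NNReal

section Helpers

lemma min_two_le_rpow {a β : ℝ} (ha : 0 ≤ a) (hβ : 0 < β) (hβ1 : β ≤ 1) :
    min 2 (2 * a) ≤ 2 * a ^ β := by
  rcases le_or_gt a 1 with h | h
  · refine (min_le_right _ _).trans ?_
    have : a ≤ a ^ β := by
      calc a = a ^ (1:ℝ) := (Real.rpow_one a).symm
        _ ≤ a ^ β := Real.rpow_le_rpow_of_exponent_ge' ha h hβ.le hβ1
    linarith
  · refine (min_le_left _ _).trans ?_
    have : (1:ℝ) ≤ a ^ β := Real.one_le_rpow h.le hβ.le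
    linarith

/-- `‖exp(Imx) - exp(Imy)‖ ≤ min 2 (2 |m| |x-y|)`. -/
lemma exp_diff_bound (m : ℤ) (x y : ℝ) :
    ‖Complex.exp (Complex.I * m * x) - Complex.exp (Complex.I * m * y)‖ ≤
      min 2 (2 * (|(m : ℝ)| * |x - y|)) := by
  have key : Complex.exp (Complex.I * m * x) - Complex.exp (Complex.I * m * y) =
      Complex.exp (Complex.I * m * y) * (Complex.exp (Complex.I * m * (x - y)) - 1) := by
    rw [mul_sub, ← Complex.exp_add, mul_one]; ring_nf
  have hnorm1 : ∀ a : ℝ, ‖Complex.exp (Complex.I * m * a)‖ = 1 := by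
    intro a
    have : Complex.I * m * a = (m * a : ℝ) * Complex.I := by push_cast; ring
    rw [this, Complex.norm_exp_ofReal_mul_I]
  have hsub : ∀ θ : ℝ, ‖Complex.exp (Complex.I * m * θ) - 1‖ ≤ min 2 (2 * (|(m:ℝ)| * |θ|)) := by
    intro θ
    have h2le : ‖Complex.exp (Complex.I * m * θ) - 1‖ ≤ 2 := by
      calc ‖Complex.exp (Complex.I * m * θ) - 1‖
          ≤ ‖Complex.exp (Complex.I * m * θ)‖ + ‖(1:ℂ)‖ := norm_sub_le _ _
        _ = 2 := by rw [hnorm1, norm_one]; norm_num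
    refine le_min h2le ?_
    have habs : ‖Complex.I * m * θ‖ = |(m:ℝ)| * |θ| := by
      simp [abs_mul]
    rcases le_or_gt (|(m:ℝ)| * |θ|) 1 with h | h
    · have := Complex.norm_exp_sub_one_le (x := Complex.I * m * θ) (by rw [habs]; exact h)
      rw [habs] at this
      exact this
    · linarith
  have hfin := hsub (x - y)
  have hco : (Complex.I * m * ((x:ℂ) - (y:ℂ))) = Complex.I * m * ((x - y : ℝ) : ℂ) := by
    push_cast; ring
  calc ‖Complex.exp (Complex.I * m * x) - Complex.exp (Complex.I * m * y)‖
      = ‖Complex.exp (Complex.I * m * y)‖ * ‖Complex.exp (Complex.I * m * ((x:ℂ) - (y:ℂ))) - 1‖ := by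
        rw [key, norm_mul]
    _ = ‖Complex.exp (Complex.I * m * ((x - y : ℝ) : ℂ)) - 1‖ := by rw [hnorm1, one_mul, hco]
    _ ≤ min 2 (2 * (|(m:ℝ)| * |x - y|)) := hfin

end Helpers

section Summability

variable {s : ℝ} {f : ℝ → ℝ}

/-- Weighted summability of Fourier coefficients. -/
lemma sum_coeff_rpow (hmem : MemHPer s f) (hs0 : 0 ≤ s) (r : ℝ) (hr : 0 ≤ r)
    (hrs : 2 * r - 2 * s < -1) :
    Summable fun m : ℤ => ‖periodicFourierCoeff f m‖ * |(m : ℝ)| ^ r := by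
  set c := periodicFourierCoeff f
  have hmaj : Summable fun m : ℤ =>
      (1/2 : ℝ) * ((1 + (m:ℝ)^2) ^ s * ‖c m‖^2 + |(m:ℝ)| ^ (2*r - 2*s)) := by
    apply Summable.mul_left
    exact hmem.2.add (by
      have := Real.summable_abs_int_rpow (b := 2*s - 2*r) (by linarith)
      convert this using 2 with m
      ring_nf)
  rw [← (Set.finite_singleton (0:ℤ)).summable_compl_iff]
  apply Summable.of_nonneg_of_le
    (fun m => mul_nonneg (norm_nonneg _) (Real.rpow_nonneg (abs_nonneg _) _))
    (fun m => ?_) (hmaj.subtype _)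
  obtain ⟨m, hm⟩ := m
  have hm0 : m ≠ 0 := fun h => hm (by simp [h])
  have hm1 : (1:ℝ) ≤ |(m:ℝ)| := by
    rw [← Int.cast_abs]
    exact_mod_cast Int.one_le_abs (by exact_mod_cast hm0)
  have hmpos : (0:ℝ) < |(m:ℝ)| := by linarith
  -- a*b ≤ (a² + b²)/2
  have key : ‖c m‖ * |(m:ℝ)| ^ r ≤
      (1/2) * ((1 + (m:ℝ)^2) ^ s * ‖c m‖^2 + (|(m:ℝ)| ^ r)^2 * ((1 + (m:ℝ)^2) ^ s)⁻¹) := by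
    have h1 : (0:ℝ) < (1 + (m:ℝ)^2) ^ s := Real.rpow_pos_of_pos (by positivity) s
    set A := ((1 + (m:ℝ)^2) ^ s).sqrt with hA
    have hA2 : A^2 = (1 + (m:ℝ)^2) ^ s := Real.sq_sqrt h1.le
    have hApos : 0 < A := Real.sqrt_pos.2 h1
    have expand : ‖c m‖ * |(m:ℝ)| ^ r = (A * ‖c m‖) * (|(m:ℝ)| ^ r / A) := by
      field_simp
    rw [expand]
    have amgm : (A * ‖c m‖) * (|(m:ℝ)| ^ r / A) ≤
        ((A * ‖c m‖)^2 + (|(m:ℝ)| ^ r / A)^2) / 2 := by nlinarith [sq_nonneg (A * ‖c m‖ - |(m:ℝ)| ^ r / A)]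
    refine amgm.trans (le_of_eq ?_)
    rw [mul_pow, div_pow, hA2, div_eq_mul_inv]
    ring
  have h2 : (|(m:ℝ)| ^ r)^2 = |(m:ℝ)| ^ (2*r) := by
    rw [← Real.rpow_natCast (|(m:ℝ)| ^ r) 2, ← Real.rpow_mul (abs_nonneg _)]
    norm_num [mul_comm]
  have hsq : |(m:ℝ)| ^ (2:ℝ) = (m:ℝ)^2 := by
    rw [show (2:ℝ) = ((2:ℕ):ℝ) by norm_num, Real.rpow_natCast, sq_abs]
  have h3 : ((1 + (m:ℝ)^2) ^ s)⁻¹ ≤ (|(m:ℝ)| ^ (2:ℝ) ) ^ (-s) := by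
    rw [Real.rpow_neg (Real.rpow_nonneg (abs_nonneg _) _)]
    apply inv_anti₀
    · apply Real.rpow_pos_of_pos
      rw [hsq]; positivity
    · apply Real.rpow_le_rpow (by rw [hsq]; positivity) _ hs0
      rw [hsq]
      nlinarith
  have hmain : (|(m:ℝ)| ^ r)^2 * ((1 + (m:ℝ)^2) ^ s)⁻¹
      ≤ |(m:ℝ)| ^ (2*r) * (|(m:ℝ)| ^ (2:ℝ)) ^ (-s) := by
    rw [h2]; exact mul_le_mul_of_nonneg_left h3 (Real.rpow_nonneg (abs_nonneg _) _)
  have hmain2 : |(m:ℝ)| ^ (2*r) * (|(m:ℝ)| ^ (2:ℝ)) ^ (-s) = |(m:ℝ)| ^ (2*r - 2*s) := by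
    rw [← Real.rpow_mul (abs_nonneg _), ← Real.rpow_add hmpos]
    ring_nf
  have hfin : (|(m:ℝ)| ^ r)^2 * ((1 + (m:ℝ)^2) ^ s)⁻¹ ≤ |(m:ℝ)| ^ (2*r - 2*s) :=
    hmain.trans (le_of_eq hmain2)
  have hle : ‖c m‖ * |(m:ℝ)| ^ r ≤
      (1/2 : ℝ) * ((1 + (m:ℝ)^2) ^ s * ‖c m‖^2 + |(m:ℝ)| ^ (2*r - 2*s)) :=
    key.trans (by linarith)
  simpa using hle

end Summability

section Deriv

lemma norm_exp_I_mul (m : ℤ) (a : ℝ) : ‖Complex.exp (Complex.I * m * a)‖ = 1 := by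
  have : Complex.I * m * a = (m * a : ℝ) * Complex.I := by push_cast; ring
  rw [this, Complex.norm_exp_ofReal_mul_I]

lemma HasDerivAt.complex_re {F : ℝ → ℂ} {d : ℂ} {x : ℝ} (h : HasDerivAt F d x) :
    HasDerivAt (fun y => (F y).re) d.re x := by
  have := Complex.reCLM.hasFDerivAt.comp_hasDerivAt x h
  exact this

lemma hasDerivAt_exp_I_mul (m : ℤ) (x : ℝ) :
    HasDerivAt (fun y : ℝ => Complex.exp (Complex.I * m * y))
      (Complex.I * m * Complex.exp (Complex.I * m * x)) x := by
  have h1 : HasDerivAt (fun y : ℝ => ((y : ℂ))) 1 x := by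
    exact Complex.ofRealCLM.hasDerivAt (x := x)
  have h2 : HasDerivAt (fun y : ℝ => Complex.I * m * (y : ℂ)) (Complex.I * m) x := by
    simpa using h1.const_mul (Complex.I * m)
  simpa [mul_comm] using h2.cexp

/-- Structure theorem: an `H^s` function with `s > 3/2` is `C^1` with a
`β`-Hölder derivative. -/
lemma deriv_structure (s β : ℝ) (hs : 3/2 < s) (hβ0 : 0 < β) (hβ1 : β ≤ 1)
    (hβs : 2*(1+β) - 2*s < -1)
    (f : ℝ → ℝ) (hf : Continuous f) (hmem : MemHPer s f) :
    ∃ g : ℝ → ℝ, ∃ M L : ℝ, 0 ≤ M ∧ 0 ≤ L ∧ Continuous g ∧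
      (∀ x, HasDerivAt f (g x) x) ∧ (∀ x, |g x| ≤ M) ∧
      (∀ x y : ℝ, |g x - g y| ≤ L * |x - y| ^ β) := by
  have hs0 : (0:ℝ) ≤ s := by linarith
  set c := periodicFourierCoeff f with hc
  have hsum0 : Summable fun m : ℤ => ‖c m‖ := by
    have := sum_coeff_rpow hmem hs0 0 le_rfl (by linarith)
    simpa using this
  have hsum1 : Summable fun m : ℤ => ‖c m‖ * |(m:ℝ)| := by
    have := sum_coeff_rpow hmem hs0 1 zero_le_one (by linarith)
    simpa using this
  have hsum1β : Summable fun m : ℤ => ‖c m‖ * |(m:ℝ)| ^ (1+β) := by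
    exact sum_coeff_rpow hmem hs0 (1+β) (by linarith) hβs
  set u : ℤ → ℝ → ℝ := fun m x => (c m * Complex.exp (Complex.I * m * x)).re with hu
  set u' : ℤ → ℝ → ℝ := fun m x => (c m * (Complex.I * m) * Complex.exp (Complex.I * m * x)).re
    with hu'
  have hder : ∀ m (x : ℝ), HasDerivAt (u m) (u' m x) x := by
    intro m x
    have := ((hasDerivAt_exp_I_mul m x).const_mul (c m)).complex_re
    simpa [hu, hu', mul_assoc, mul_comm, mul_left_comm] using this
  have hbound' : ∀ m (x : ℝ), ‖u' m x‖ ≤ ‖c m‖ * |(m:ℝ)| := by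
    intro m x
    calc ‖u' m x‖ ≤ ‖c m * (Complex.I * m) * Complex.exp (Complex.I * m * x)‖ := by
          simpa [hu'] using Complex.abs_re_le_norm (c m * (Complex.I * m) *
            Complex.exp (Complex.I * m * x))
      _ = ‖c m‖ * |(m:ℝ)| := by
          rw [norm_mul, norm_mul, norm_exp_I_mul, mul_one, norm_mul, Complex.norm_I, one_mul]
          norm_num [Complex.norm_intCast]
  -- sum of the series is f
  haveI : Fact (0 < 2*π) := ⟨by positivity⟩
  have hfc : Continuous fun t : ℝ => ((f t : ℂ)) := Complex.continuous_ofReal.comp hf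
  have hperc : Function.Periodic (fun t : ℝ => ((f t : ℂ))) (2*π) := fun x => by
    simp [hmem.1 x]
  have hGcont : Continuous hperc.lift := Continuous.quotient_liftOn' hfc _
  set G : C(AddCircle (2*π), ℂ) := ⟨hperc.lift, hGcont⟩ with hG
  have hfourier_eq : ∀ (n : ℤ) (x : ℝ),
      (fourier n ((x : ℝ) : AddCircle (2*π)) : ℂ) = Complex.exp (Complex.I * n * x) := by
    intro n x
    rw [fourier_coe_apply]
    congr 1
    have hπ : (π : ℂ) ≠ 0 := Complex.ofReal_ne_zero.2 Real.pi_ne_zero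
    field_simp
    push_cast
    ring
  have hcoeff : ∀ n : ℤ, fourierCoeff (⇑G) n = c n := by
    intro n
    rw [fourierCoeff_eq_intervalIntegral (⇑G) n (-π)]
    have hint : (-π + 2*π) = π := by ring
    rw [hint]
    rw [hc]
    unfold periodicFourierCoeff
    rw [Complex.real_smul]
    congr 1
    · push_cast; ring
    · apply intervalIntegral.integral_congr
      intro x _
      have hGx : G ((x : ℝ) : AddCircle (2*π)) = ((f x : ℂ)) := rfl
      simp only [smul_eq_mul]
      rw [hGx, hfourier_eq (-n) x]
      push_cast
      rw [mul_comm]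
      congr 2
      ring
  have hsumc : Summable (fourierCoeff (⇑G)) := by
    apply Summable.of_norm
    simp only [hcoeff]
    exact hsum0
  have hpt : ∀ x : ℝ, HasSum (fun m => u m x) (f x) := by
    intro x
    have h1 := has_pointwise_sum_fourier_series_of_summable hsumc ((x : ℝ) : AddCircle (2*π))
    have h2 : HasSum (fun i => c i * Complex.exp (Complex.I * i * x)) ((f x : ℂ)) := by
      have hGx : G ((x : ℝ) : AddCircle (2*π)) = ((f x : ℂ)) := rfl
      rw [hGx] at h1
      refine HasSum.congr_fun h1 ?_
      intro i
      rw [hcoeff, smul_eq_mul, hfourier_eq]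
    have h3 := h2.mapL Complex.reCLM
    simpa [hu] using h3
  have hfx : ∀ x : ℝ, f x = ∑' m, u m x := fun x => (hpt x).tsum_eq.symm
  set g : ℝ → ℝ := fun x => ∑' m, u' m x with hgdef
  have hgd : ∀ x : ℝ, HasDerivAt (fun y => ∑' m, u m y) (g x) x := fun x =>
    hasDerivAt_tsum hsum1 hder hbound' ((hpt 0).summable) x
  have hfder : ∀ x : ℝ, HasDerivAt f (g x) x := by
    intro x
    exact (hgd x).congr_of_eventuallyEq (Filter.Eventually.of_forall hfx)
  have hu'sum : ∀ x : ℝ, Summable fun m => ‖u' m x‖ :=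
    fun x => Summable.of_nonneg_of_le (fun m => norm_nonneg _) (fun m => hbound' m x) hsum1
  refine ⟨g, ∑' m, ‖c m‖ * |(m:ℝ)|, 2 * ∑' m, ‖c m‖ * |(m:ℝ)| ^ (1+β),
    tsum_nonneg (fun m => by positivity),
    mul_nonneg zero_le_two (tsum_nonneg (fun m => by positivity)), ?_, hfder, ?_, ?_⟩
  · -- continuity of g
    apply continuous_tsum (fun m => ?_) hsum1 hbound'
    have : Continuous fun x : ℝ => c m * (Complex.I * m) * Complex.exp (Complex.I * m * x) :=
      continuous_const.mul (Complex.continuous_exp.comp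
        (continuous_const.mul Complex.continuous_ofReal))
    exact Complex.continuous_re.comp this
  · -- sup bound
    intro x
    calc |g x| ≤ ∑' m, ‖u' m x‖ := by
          simpa using norm_tsum_le_tsum_norm (hu'sum x)
      _ ≤ ∑' m, ‖c m‖ * |(m:ℝ)| := Summable.tsum_le_tsum (fun m => hbound' m x) (hu'sum x) hsum1
  · -- Hölder bound
    intro x y
    have hsux : Summable fun m => u' m x := (hu'sum x).of_norm
    have hsuy : Summable fun m => u' m y := (hu'sum y).of_norm
    have hdiff : g x - g y = ∑' m, (u' m x - u' m y) := (Summable.tsum_sub hsux hsuy).symm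
    have hptw : ∀ m : ℤ, ‖u' m x - u' m y‖ ≤
        (‖c m‖ * |(m:ℝ)| ^ (1+β)) * (2 * |x - y| ^ β) := by
      intro m
      have he : u' m x - u' m y = (c m * (Complex.I * m) *
          (Complex.exp (Complex.I * m * x) - Complex.exp (Complex.I * m * y))).re := by
        simp [hu', mul_sub]
      rw [he]
      calc ‖(c m * (Complex.I * m) * (Complex.exp (Complex.I * m * x) -
              Complex.exp (Complex.I * m * y))).re‖
          ≤ ‖c m * (Complex.I * m) * (Complex.exp (Complex.I * m * x) -
              Complex.exp (Complex.I * m * y))‖ := Complex.abs_re_le_norm _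
        _ = ‖c m‖ * |(m:ℝ)| * ‖Complex.exp (Complex.I * m * x) -
              Complex.exp (Complex.I * m * y)‖ := by
            rw [norm_mul, norm_mul, norm_mul, Complex.norm_I, one_mul]
            norm_num [Complex.norm_intCast]
        _ ≤ ‖c m‖ * |(m:ℝ)| * min 2 (2 * (|(m:ℝ)| * |x - y|)) := by
            apply mul_le_mul_of_nonneg_left (exp_diff_bound m x y) (by positivity)
        _ ≤ ‖c m‖ * |(m:ℝ)| * (2 * (|(m:ℝ)| * |x - y|) ^ β) := by
            apply mul_le_mul_of_nonneg_left
              (min_two_le_rpow (by positivity) hβ0 hβ1) (by positivity)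
        _ = (‖c m‖ * |(m:ℝ)| ^ (1+β)) * (2 * |x - y| ^ β) := by
            rw [Real.mul_rpow (abs_nonneg _) (abs_nonneg _),
              Real.rpow_add' (abs_nonneg _) (by linarith), Real.rpow_one]
            ring
    have hsumdiff : Summable fun m => ‖u' m x - u' m y‖ :=
      Summable.of_nonneg_of_le (fun m => norm_nonneg _) hptw
        (hsum1β.mul_right (2 * |x - y| ^ β))
    calc |g x - g y| = ‖∑' m, (u' m x - u' m y)‖ := by rw [hdiff]; rfl
      _ ≤ ∑' m, ‖u' m x - u' m y‖ := norm_tsum_le_tsum_norm hsumdiff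
      _ ≤ ∑' m, (‖c m‖ * |(m:ℝ)| ^ (1+β)) * (2 * |x - y| ^ β) :=
          Summable.tsum_le_tsum hptw hsumdiff (hsum1β.mul_right _)
      _ = (2 * ∑' m, ‖c m‖ * |(m:ℝ)| ^ (1+β)) * |x - y| ^ β := by
          rw [tsum_mul_right]; ring

end Deriv

/-- From a real dist bound to `HolderWith`. -/
lemma holderWith_of_dist_le {K r : ℝ} (hK : 0 ≤ K) (hr : 0 ≤ r) {f : ℝ → ℝ}
    (h : ∀ x y : ℝ, |f x - f y| ≤ K * |x - y| ^ r) :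
    HolderWith K.toNNReal r.toNNReal f := by
  intro x y
  rw [edist_dist, edist_dist]
  have hd : dist (f x) (f y) ≤ K * dist x y ^ r := by
    simpa [Real.dist_eq] using h x y
  calc ENNReal.ofReal (dist (f x) (f y)) ≤ ENNReal.ofReal (K * dist x y ^ r) :=
        ENNReal.ofReal_le_ofReal hd
    _ = ENNReal.ofReal K * ENNReal.ofReal (dist x y ^ r) := ENNReal.ofReal_mul hK
    _ = ENNReal.ofReal K * ENNReal.ofReal (dist x y) ^ r := by
        rw [← ENNReal.ofReal_rpow_of_nonneg dist_nonneg hr]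
    _ = (K.toNNReal : ℝ≥0∞) * ENNReal.ofReal (dist x y) ^ ((r.toNNReal : ℝ)) := by
        rw [ENNReal.ofReal, Real.coe_toNNReal _ hr]


open intervalIntegral

lemma abs_le_interp {z a b : ℝ} (ha : |z| ≤ a) (hb : |z| ≤ b) :
    |z| ≤ a ^ ((1:ℝ)/4) * b ^ ((3:ℝ)/4) := by
  have hz : (0:ℝ) ≤ |z| := abs_nonneg z
  have h1 : |z| = |z| ^ ((1:ℝ)/4) * |z| ^ ((3:ℝ)/4) := by
    rw [← Real.rpow_add' hz (by norm_num)]; norm_num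
  rw [h1]
  exact mul_le_mul (Real.rpow_le_rpow hz ha (by norm_num))
    (Real.rpow_le_rpow hz hb (by norm_num)) (Real.rpow_nonneg hz _)
    (Real.rpow_nonneg (hz.trans ha) _)

lemma inv_one_add_sq_diff_le {a b M : ℝ} (ha : |a| ≤ M) (hb : |b| ≤ M) :
    |(1 + a ^ 2)⁻¹ - (1 + b ^ 2)⁻¹| ≤ 2 * M * |a - b| := by
  have h1 : (0:ℝ) < 1 + a ^ 2 := by positivity
  have h2 : (0:ℝ) < 1 + b ^ 2 := by positivity
  have key : (1 + a ^ 2)⁻¹ - (1 + b ^ 2)⁻¹ = (b ^ 2 - a ^ 2) * ((1 + a ^ 2)⁻¹ * (1 + b ^ 2)⁻¹) := by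
    field_simp
    ring
  rw [key, abs_mul]
  have hinv : |(1 + a ^ 2)⁻¹ * (1 + b ^ 2)⁻¹| ≤ 1 := by
    rw [abs_mul, abs_of_pos (inv_pos.2 h1), abs_of_pos (inv_pos.2 h2)]
    calc (1 + a ^ 2)⁻¹ * (1 + b ^ 2)⁻¹ ≤ 1 * 1 := by
          apply mul_le_mul <;> first
            | exact inv_le_one_of_one_le₀ (by nlinarith)
            | positivity
      _ = 1 := by ring
  have habs : |b ^ 2 - a ^ 2| ≤ 2 * M * |a - b| := by
    have : b ^ 2 - a ^ 2 = (b - a) * (b + a) := by ring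
    rw [this, abs_mul]
    have h3 : |b - a| = |a - b| := abs_sub_comm b a
    have h4 : |b + a| ≤ 2 * M := by
      calc |b + a| ≤ |b| + |a| := abs_add_le _ _
        _ ≤ 2 * M := by linarith
    calc |b - a| * |b + a| ≤ |a - b| * (2 * M) := by
          rw [h3]; exact mul_le_mul_of_nonneg_left h4 (abs_nonneg _)
      _ = 2 * M * |a - b| := by ring
  calc |b ^ 2 - a ^ 2| * |(1 + a ^ 2)⁻¹ * (1 + b ^ 2)⁻¹| ≤ |b ^ 2 - a ^ 2| * 1 :=
        mul_le_mul_of_nonneg_left hinv (abs_nonneg _)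
    _ ≤ 2 * M * |a - b| := by rw [mul_one]; exact habs

noncomputable def pvK (F : ℝ → ℝ) (x t : ℝ) : ℝ :=
  (1 / t) * (1 + ((F x - F (x - t)) / t) ^ 2)⁻¹

noncomputable def pvSym (F : ℝ → ℝ) (x t : ℝ) : ℝ := pvK F x t + pvK F x (-t)

noncomputable def pvPhi (F : ℝ → ℝ) (x : ℝ) : ℝ := ∫ t in Set.Ioo (0:ℝ) π, pvSym F x t

section PV

variable {β M L : ℝ} {F g : ℝ → ℝ}
variable (hβ0 : 0 < β) (hβ1 : β ≤ 1) (hM : 0 < M) (hL : 0 < L)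
variable (hder : ∀ x, HasDerivAt F (g x) x) (hgc : Continuous g)
variable (hgM : ∀ x, |g x| ≤ M) (hgL : ∀ x y : ℝ, |g x - g y| ≤ L * |x - y| ^ β)

section Pointwise
include hder hgc

lemma pv_ftc : ∀ x t : ℝ, F x - F (x - t) = ∫ u in (x - t)..x, g u := fun x t =>
  (integral_eq_sub_of_hasDerivAt (fun u _ => hder u) (hgc.intervalIntegrable _ _)).symm

include hgM in
lemma pv_lip : ∀ x t : ℝ, |F x - F (x - t)| ≤ M * |t| := by
  intro x t
  rw [pv_ftc hder hgc]
  have := intervalIntegral.norm_integral_le_of_norm_le_const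
    (f := g) (a := x - t) (b := x) (C := M) (fun u _ => hgM u)
  simpa [abs_sub_comm t] using this

include hgL in
lemma pv_sym_diff : ∀ (x : ℝ) {t : ℝ}, 0 < t →
    |(F x - F (x - t)) - (F (x + t) - F x)| ≤ L * t ^ β * t := by
  intro x t ht
  have h1 : F x - F (x - t) = ∫ u in (x - t)..x, g u := pv_ftc hder hgc x t
  have h2 : F (x + t) - F x = ∫ u in (x - t)..x, g (u + t) := by
    rw [intervalIntegral.integral_comp_add_right]
    have h3 : F (x + t) - F x = F (x + t) - F ((x + t) - t) := by norm_num
    rw [h3, pv_ftc hder hgc (x + t) t]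
    norm_num
  have hint2 : IntervalIntegrable (fun u : ℝ => g (u + t)) volume (x - t) x :=
    Continuous.intervalIntegrable (by fun_prop) _ _
  rw [h1, h2, ← intervalIntegral.integral_sub (hgc.intervalIntegrable _ _) hint2]
  have hb := intervalIntegral.norm_integral_le_of_norm_le_const
    (f := fun u => g u - g (u + t)) (a := x - t) (b := x) (C := L * t ^ β)
    (fun u _ => by
      have := hgL u (u + t)
      simpa [abs_of_pos ht] using this)
  calc ‖∫ u in (x - t)..x, (g u - g (u + t))‖ ≤ L * t ^ β * |x - (x - t)| := hb
    _ = L * t ^ β * t := by rw [show x - (x - t) = t by ring, abs_of_pos ht]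

include hgL in
lemma pv_x_diff : ∀ x y t : ℝ,
    |(F x - F (x - t)) - (F y - F (y - t))| ≤ L * |x - y| ^ β * |t| := by
  intro x y t
  have h1 : F x - F (x - t) = ∫ u in (x - t)..x, g u := pv_ftc hder hgc x t
  have h2 : F y - F (y - t) = ∫ u in (x - t)..x, g (u + (y - x)) := by
    rw [intervalIntegral.integral_comp_add_right]
    rw [show x - t + (y - x) = y - t by ring, show x + (y - x) = y by ring]
    exact pv_ftc hder hgc y t
  have hint2 : IntervalIntegrable (fun u : ℝ => g (u + (y - x))) volume (x - t) x :=
    Continuous.intervalIntegrable (by fun_prop) _ _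
  rw [h1, h2, ← intervalIntegral.integral_sub (hgc.intervalIntegrable _ _) hint2]
  have hb := intervalIntegral.norm_integral_le_of_norm_le_const
    (f := fun u => g u - g (u + (y - x))) (a := x - t) (b := x) (C := L * |x - y| ^ β)
    (fun u _ => by
      have := hgL u (u + (y - x))
      have he : |u - (u + (y - x))| = |x - y| := by
        rw [show u - (u + (y - x)) = x - y by ring]
      rw [he] at this
      simpa using this)
  calc ‖∫ u in (x - t)..x, (g u - g (u + (y - x)))‖ ≤ L * |x - y| ^ β * |x - (x - t)| := hb
    _ = L * |x - y| ^ β * |t| := by rw [show x - (x - t) = t by ring]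

end Pointwise

section Kernel
include hder hgc hgM hgL

lemma pv_sym_bound (hβ0 : 0 < β) (hM : 0 ≤ M) :
    ∀ (x : ℝ) {t : ℝ}, 0 < t → |pvSym F x t| ≤ 2 * M * L * t ^ (β - 1) := by
  intro x t ht
  have ht' : t ≠ 0 := ht.ne'
  set A := (F x - F (x - t)) / t with hA
  set B := (F (x + t) - F x) / t with hB
  have hsym : pvSym F x t = (1/t) * ((1 + A^2)⁻¹ - (1 + B^2)⁻¹) := by
    unfold pvSym pvK
    rw [show x - -t = x + t by ring]
    have h1 : (F x - F (x + t)) / (-t) = B := by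
      rw [div_neg, hB]; ring
    rw [h1, ← hA]
    have e1 : (1:ℝ) + A^2 ≠ 0 := by positivity
    have e2 : (1:ℝ) + B^2 ≠ 0 := by positivity
    field_simp
    ring
  have hAM : |A| ≤ M := by
    rw [hA, abs_div, abs_of_pos ht]
    rw [div_le_iff₀ ht]
    have := pv_lip hder hgc hgM x t
    rwa [abs_of_pos ht] at this
  have hBM : |B| ≤ M := by
    rw [hB, abs_div, abs_of_pos ht, div_le_iff₀ ht]
    have := pv_lip hder hgc hgM x (-t)
    rw [show x - -t = x + t by ring, abs_neg, abs_of_pos ht, abs_sub_comm] at this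
    exact this
  have hAB : |A - B| ≤ L * t ^ β := by
    have hnum := pv_sym_diff hder hgc hgL x ht
    have : A - B = ((F x - F (x - t)) - (F (x + t) - F x)) / t := by
      rw [hA, hB]; ring
    rw [this, abs_div, abs_of_pos ht, div_le_iff₀ ht]
    exact hnum
  have hd := inv_one_add_sq_diff_le hAM hBM
  calc |pvSym F x t| = (1/t) * |(1 + A^2)⁻¹ - (1 + B^2)⁻¹| := by
        rw [hsym, abs_mul, abs_of_pos (by positivity : (0:ℝ) < 1/t)]
    _ ≤ (1/t) * (2 * M * (L * t ^ β)) := by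
        apply mul_le_mul_of_nonneg_left _ (by positivity)
        exact hd.trans (mul_le_mul_of_nonneg_left hAB (by positivity))
    _ = 2 * M * L * t ^ (β - 1) := by
        rw [Real.rpow_sub ht, Real.rpow_one]
        field_simp

lemma pv_sym_xdiff (hM : 0 ≤ M) :
    ∀ (x y : ℝ) {t : ℝ}, 0 < t →
      |pvSym F x t - pvSym F y t| ≤ (1/t) * (4 * M * L * |x - y| ^ β) := by
  intro x y t ht
  have ht' : t ≠ 0 := ht.ne'
  set Ax := (F x - F (x - t)) / t with hAx
  set Bx := (F (x + t) - F x) / t with hBx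
  set Ay := (F y - F (y - t)) / t with hAy
  set By := (F (y + t) - F y) / t with hBy
  have habs : ∀ z : ℝ, |(F z - F (z - t)) / t| ≤ M := by
    intro z
    rw [abs_div, abs_of_pos ht, div_le_iff₀ ht]
    have := pv_lip hder hgc hgM z t
    rwa [abs_of_pos ht] at this
  have habs' : ∀ z : ℝ, |(F (z + t) - F z) / t| ≤ M := by
    intro z
    rw [abs_div, abs_of_pos ht, div_le_iff₀ ht]
    have := pv_lip hder hgc hgM z (-t)
    rwa [show z - -t = z + t by ring, abs_neg, abs_of_pos ht, abs_sub_comm] at this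
  have hsym : ∀ z : ℝ, pvSym F z t = (1/t) * (((1 + ((F z - F (z - t)) / t)^2)⁻¹
      - (1 + ((F (z + t) - F z) / t)^2)⁻¹)) := by
    intro z
    unfold pvSym pvK
    rw [show z - -t = z + t by ring]
    have h1 : (F z - F (z + t)) / (-t) = (F (z + t) - F z) / t := by
      rw [div_neg]; ring
    rw [h1]
    have e1 : (1:ℝ) + ((F z - F (z - t)) / t)^2 ≠ 0 := by positivity
    have e2 : (1:ℝ) + ((F (z + t) - F z) / t)^2 ≠ 0 := by positivity
    field_simp
    ring
  have hAd : |Ax - Ay| ≤ L * |x - y| ^ β := by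
    have := pv_x_diff hder hgc hgL x y t
    rw [hAx, hAy, div_sub_div_same, abs_div, abs_of_pos ht, div_le_iff₀ ht]
    rwa [abs_of_pos ht] at this
  have hBd : |Bx - By| ≤ L * |x - y| ^ β := by
    have := pv_x_diff hder hgc hgL x y (-t)
    rw [show x - -t = x + t by ring, show y - -t = y + t by ring,
      abs_neg, abs_of_pos ht] at this
    rw [hBx, hBy, div_sub_div_same, abs_div, abs_of_pos ht, div_le_iff₀ ht]
    calc |F (x + t) - F x - (F (y + t) - F y)|
        = |F x - F (x + t) - (F y - F (y + t))| := by rw [← abs_neg]; ring_nf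
      _ ≤ L * |x - y| ^ β * t := this
  have h1 := inv_one_add_sq_diff_le (habs x) (habs y)
  have h2 := inv_one_add_sq_diff_le (habs' x) (habs' y)
  rw [← hAx, ← hAy] at h1
  rw [← hBx, ← hBy] at h2
  calc |pvSym F x t - pvSym F y t|
      = (1/t) * |((1 + Ax^2)⁻¹ - (1 + Ay^2)⁻¹) - ((1 + Bx^2)⁻¹ - (1 + By^2)⁻¹)| := by
        rw [hsym x, hsym y, ← hAx, ← hBx, ← hAy, ← hBy, ← mul_sub, abs_mul,
          abs_of_pos (by positivity : (0:ℝ) < 1/t)]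
        congr 2
        ring
    _ ≤ (1/t) * (|(1 + Ax^2)⁻¹ - (1 + Ay^2)⁻¹| + |(1 + Bx^2)⁻¹ - (1 + By^2)⁻¹|) := by
        apply mul_le_mul_of_nonneg_left (abs_sub _ _) (by positivity)
    _ ≤ (1/t) * (2 * M * (L * |x - y| ^ β) + 2 * M * (L * |x - y| ^ β)) := by
        apply mul_le_mul_of_nonneg_left _ (by positivity)
        exact add_le_add (h1.trans (mul_le_mul_of_nonneg_left hAd (by positivity)))
          (h2.trans (mul_le_mul_of_nonneg_left hBd (by positivity)))
    _ = (1/t) * (4 * M * L * |x - y| ^ β) := by ring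

end Kernel

section Integrability

lemma integral_rpow_Ioo {p : ℝ} (hp : -1 < p) :
    ∫ t in Set.Ioo (0:ℝ) π, t ^ p = π ^ (p + 1) / (p + 1) := by
  rw [← MeasureTheory.integral_Ioc_eq_integral_Ioo,
    ← intervalIntegral.integral_of_le Real.pi_pos.le,
    integral_rpow (Or.inl hp), Real.zero_rpow (by linarith)]
  ring

lemma integrableOn_rpow_Ioo {p : ℝ} (hp : -1 < p) :
    IntegrableOn (fun t : ℝ => t ^ p) (Set.Ioo 0 π) volume := by
  have h := intervalIntegrable_rpow' (a := 0) (b := π) hp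
  rw [intervalIntegrable_iff_integrableOn_Ioc_of_le Real.pi_pos.le] at h
  exact h.mono_set Set.Ioo_subset_Ioc_self

lemma pvK_contOn (hFc : Continuous F) (x : ℝ) :
    ContinuousOn (pvK F x) {t : ℝ | t ≠ 0} := by
  have h2 : ContinuousOn (fun t : ℝ => (F x - F (x - t)) / t) {t : ℝ | t ≠ 0} :=
    ContinuousOn.div
      ((continuous_const.sub (hFc.comp (continuous_const.sub continuous_id))).continuousOn)
      continuousOn_id (fun t ht => ht)
  have h3 : ContinuousOn (fun t : ℝ => (1 + ((F x - F (x - t)) / t) ^ 2)⁻¹)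
      {t : ℝ | t ≠ 0} :=
    (continuousOn_const.add (h2.pow 2)).inv₀ (fun t _ => (add_pos_of_pos_of_nonneg one_pos (sq_nonneg _)).ne')
  exact (continuousOn_const.div continuousOn_id (fun t ht => ht)).mul h3

lemma pv_contOn (hFc : Continuous F) (x : ℝ) :
    ContinuousOn (pvSym F x) {t : ℝ | t ≠ 0} := by
  have hK := pvK_contOn hFc x
  have hneg : ContinuousOn (fun t : ℝ => pvK F x (-t)) {t : ℝ | t ≠ 0} := by
    apply hK.comp continuous_neg.continuousOn
    intro t ht
    simpa using ht
  exact hK.add hneg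

include hβ0 hM hder hgc hgM hgL in
lemma pv_integrableOn (x : ℝ) :
    IntegrableOn (pvSym F x) (Set.Ioo 0 π) volume := by
  have hFc : Continuous F := continuous_iff_continuousAt.2 fun z => (hder z).continuousAt
  have hmeas : AEStronglyMeasurable (pvSym F x) (volume.restrict (Set.Ioo 0 π)) :=
    ((pv_contOn hFc x).mono (fun t ht => ne_of_gt ht.1)).aestronglyMeasurable
      measurableSet_Ioo
  apply Integrable.mono' ((integrableOn_rpow_Ioo (by linarith : (-1:ℝ) < β - 1)).const_mul
    (2 * M * L)) hmeas
  refine ae_restrict_of_forall_mem measurableSet_Ioo fun t ht => ?_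
  rw [Real.norm_eq_abs]
  exact pv_sym_bound hder hgc hgM hgL hβ0 hM.le x ht.1

include hβ0 hM hL hder hgc hgM hgL in
lemma pv_tendsto (x : ℝ) :
    Tendsto (fun ε : ℝ => ∫ t in {t : ℝ | ε < |t| ∧ |t| < π}, pvK F x t)
      (nhdsWithin 0 (Set.Ioi 0)) (nhds (pvPhi F x)) := by
  have hFc : Continuous F := continuous_iff_continuousAt.2 fun z => (hder z).continuousAt
  have hIoo := pv_integrableOn hβ0 hM hder hgc hgM hgL x
  have hIoc : IntegrableOn (pvSym F x) (Set.Ioc 0 π) volume :=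
    hIoo.congr_set_ae MeasureTheory.Ioo_ae_eq_Ioc.symm
  have hII : IntervalIntegrable (pvSym F x) volume 0 π :=
    (intervalIntegrable_iff_integrableOn_Ioc_of_le Real.pi_pos.le).2 hIoc
  have hphi : pvPhi F x = ∫ t in (0:ℝ)..π, pvSym F x t := by
    rw [intervalIntegral.integral_of_le Real.pi_pos.le,
      MeasureTheory.integral_Ioc_eq_integral_Ioo]
    rfl
  have hmem : Set.Ioo (0:ℝ) π ∈ nhdsWithin (0:ℝ) (Set.Ioi 0) :=
    Ioo_mem_nhdsGT_of_mem ⟨le_refl 0, Real.pi_pos⟩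
  -- the small integral tends to zero
  have hsmall : Tendsto (fun ε : ℝ => ∫ t in (0:ℝ)..ε, pvSym F x t)
      (nhdsWithin 0 (Set.Ioi 0)) (nhds 0) := by
    have hbnd : ∀ᶠ ε in nhdsWithin (0:ℝ) (Set.Ioi 0),
        ‖∫ t in (0:ℝ)..ε, pvSym F x t‖ ≤ 2*M*L/β * ε ^ β := by
      filter_upwards [hmem] with ε hε
      have hae : ∀ᵐ t ∂volume.restrict (Set.uIoc (0:ℝ) ε),
          ‖pvSym F x t‖ ≤ 2*M*L*t^(β-1) := by
        rw [Set.uIoc_of_le hε.1.le]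
        refine ae_restrict_of_forall_mem measurableSet_Ioc fun t ht => ?_
        rw [Real.norm_eq_abs]
        exact pv_sym_bound hder hgc hgM hgL hβ0 hM.le x ht.1
      have hb := intervalIntegral.norm_integral_le_of_norm_le hε.1.le
          ((ae_restrict_iff' measurableSet_Ioc).1 (by rwa [Set.uIoc_of_le hε.1.le] at hae))
        ((intervalIntegrable_rpow' (by linarith)).const_mul _)
      rw [intervalIntegral.integral_const_mul, integral_rpow (Or.inl (by linarith)),
        show β - 1 + 1 = β by ring, Real.zero_rpow hβ0.ne'] at hb
      have hnn : (0:ℝ) ≤ 2 * M * L * ((ε ^ β - 0 ^ β) / β) := by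
        apply mul_nonneg (by positivity)
        apply div_nonneg _ hβ0.le
        rw [Real.zero_rpow hβ0.ne', sub_zero]
        exact Real.rpow_nonneg hε.1.le β
      rw [Real.zero_rpow hβ0.ne'] at hnn
      refine hb.trans (le_of_eq (by field_simp; ring))
    refine squeeze_zero_norm' hbnd ?_
    have h0 : Tendsto (fun ε : ℝ => ε ^ β) (nhdsWithin 0 (Set.Ioi 0)) (nhds 0) := by
      have hc := (Real.continuousAt_rpow_const 0 β (Or.inr hβ0.le)).tendsto
      rw [Real.zero_rpow hβ0.ne'] at hc
      exact hc.mono_left nhdsWithin_le_nhds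
    have := h0.const_mul (2*M*L/β)
    simpa using this
  -- eventual identification of the truncated integral
  have hev : ∀ᶠ ε in nhdsWithin (0:ℝ) (Set.Ioi 0),
      (∫ t in {t : ℝ | ε < |t| ∧ |t| < π}, pvK F x t)
        = (∫ t in (0:ℝ)..π, pvSym F x t) - ∫ t in (0:ℝ)..ε, pvSym F x t := by
    filter_upwards [hmem] with ε hε
    obtain ⟨hε0, hεπ⟩ := hε
    have hset : {t : ℝ | ε < |t| ∧ |t| < π} = Set.Ioo ε π ∪ Set.Ioo (-π) (-ε) := by
      ext t
      simp only [Set.mem_setOf_eq, Set.mem_union, Set.mem_Ioo, abs_lt, lt_abs]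
      constructor
      · rintro ⟨h1 | h1, h2, h3⟩
        · left; exact ⟨h1, h3⟩
        · right; exact ⟨h2, by linarith⟩
      · rintro (⟨h1, h2⟩ | ⟨h1, h2⟩)
        · exact ⟨Or.inl h1, by linarith, h2⟩
        · exact ⟨Or.inr (by linarith), h1, by linarith [Real.pi_pos]⟩
    have hsub1 : Set.Icc ε π ⊆ {t : ℝ | t ≠ 0} := fun t ht => by
      have := ht.1; intro h; rw [h] at this; linarith
    have hsub2 : Set.Icc (-π) (-ε) ⊆ {t : ℝ | t ≠ 0} := fun t ht => by
      have := ht.2; intro h; rw [h] at this; linarith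
    have hI1 : IntegrableOn (pvK F x) (Set.Ioo ε π) volume :=
      (((pvK_contOn hFc x).mono hsub1).integrableOn_Icc).mono_set Set.Ioo_subset_Icc_self
    have hI2 : IntegrableOn (pvK F x) (Set.Ioo (-π) (-ε)) volume :=
      (((pvK_contOn hFc x).mono hsub2).integrableOn_Icc).mono_set Set.Ioo_subset_Icc_self
    have hdisj : Disjoint (Set.Ioo ε π) (Set.Ioo (-π) (-ε)) := by
      rw [Set.disjoint_left]
      rintro t ⟨h1, _⟩ ⟨_, h4⟩
      linarith
    rw [hset, MeasureTheory.setIntegral_union hdisj measurableSet_Ioo hI1 hI2]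
    have hfirst : ∫ t in Set.Ioo ε π, pvK F x t = ∫ t in ε..π, pvK F x t := by
      rw [intervalIntegral.integral_of_le hεπ.le, MeasureTheory.integral_Ioc_eq_integral_Ioo]
    have hsecond : ∫ t in Set.Ioo (-π) (-ε), pvK F x t = ∫ t in ε..π, pvK F x (-t) := by
      rw [intervalIntegral.integral_comp_neg, intervalIntegral.integral_of_le
        (by linarith : -π ≤ -ε), MeasureTheory.integral_Ioc_eq_integral_Ioo]
    have hci1 : IntervalIntegrable (pvK F x) volume ε π := by
      apply ContinuousOn.intervalIntegrable
      rw [Set.uIcc_of_le hεπ.le]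
      exact (pvK_contOn hFc x).mono hsub1
    have hci2 : IntervalIntegrable (fun t => pvK F x (-t)) volume ε π := by
      apply ContinuousOn.intervalIntegrable
      rw [Set.uIcc_of_le hεπ.le]
      refine ((pvK_contOn hFc x).comp continuous_neg.continuousOn ?_).mono hsub1
      intro t ht
      simpa using ht
    have hadd : (∫ t in ε..π, pvK F x t) + (∫ t in ε..π, pvK F x (-t))
        = ∫ t in ε..π, pvSym F x t := by
      rw [← intervalIntegral.integral_add hci1 hci2]
      rfl
    have hsplit : (∫ t in (0:ℝ)..ε, pvSym F x t) + (∫ t in ε..π, pvSym F x t)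
        = ∫ t in (0:ℝ)..π, pvSym F x t := by
      apply intervalIntegral.integral_add_adjacent_intervals
      · exact hII.mono_set (Set.uIcc_subset_uIcc (by simp [Real.pi_pos.le])
          (by simp [Set.mem_uIcc]; left; exact ⟨hε0.le, hεπ.le⟩))
      · exact hII.mono_set (Set.uIcc_subset_uIcc
          (by simp [Set.mem_uIcc]; left; exact ⟨hε0.le, hεπ.le⟩) (by simp [Real.pi_pos.le]))
    rw [hfirst, hsecond, hadd]
    linarith
  have hfinal : Tendsto (fun ε : ℝ =>
      (∫ t in (0:ℝ)..π, pvSym F x t) - ∫ t in (0:ℝ)..ε, pvSym F x t)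
      (nhdsWithin 0 (Set.Ioi 0)) (nhds ((∫ t in (0:ℝ)..π, pvSym F x t) - 0)) :=
    (tendsto_const_nhds (f := nhdsWithin (0:ℝ) (Set.Ioi 0))
      (x := ∫ t in (0:ℝ)..π, pvSym F x t)).sub hsmall
  rw [sub_zero] at hfinal
  rw [show nhds (pvPhi F x) = nhds (∫ t in (0:ℝ)..π, pvSym F x t) by rw [hphi]]
  exact Tendsto.congr' (Filter.EventuallyEq.symm hev) hfinal

lemma pv_periodic (hFper : Function.Periodic F (2*π)) :
    Function.Periodic (pvPhi F) (2*π) := by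
  intro x
  unfold pvPhi
  apply MeasureTheory.setIntegral_congr_fun measurableSet_Ioo
  intro t _
  unfold pvSym pvK
  rw [hFper x, show x + 2*π - t = (x - t) + 2*π by ring, hFper (x - t),
    show x + 2*π - -t = (x - -t) + 2*π by ring, hFper (x - -t)]

include hβ0 hM hL hder hgc hgM hgL in
lemma pv_sup (x : ℝ) : |pvPhi F x| ≤ 2*M*L*(π^β/β) := by
  have hIoo := pv_integrableOn hβ0 hM hder hgc hgM hgL x
  have h1 : |pvPhi F x| ≤ ∫ t in Set.Ioo (0:ℝ) π, |pvSym F x t| := by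
    simpa [Real.norm_eq_abs, pvPhi] using
      MeasureTheory.norm_integral_le_integral_norm (μ := volume.restrict (Set.Ioo 0 π))
        (pvSym F x)
  have h2 : ∫ t in Set.Ioo (0:ℝ) π, |pvSym F x t|
      ≤ ∫ t in Set.Ioo (0:ℝ) π, 2*M*L*t^(β-1) := by
    apply MeasureTheory.setIntegral_mono_on hIoo.abs
      ((integrableOn_rpow_Ioo (by linarith : (-1:ℝ) < β - 1)).const_mul (2*M*L))
      measurableSet_Ioo
    intro t ht
    exact pv_sym_bound hder hgc hgM hgL hβ0 hM.le x ht.1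
  have h3 : ∫ t in Set.Ioo (0:ℝ) π, 2*M*L*t^(β-1) = 2*M*L*(π^β/β) := by
    rw [MeasureTheory.integral_const_mul, integral_rpow_Ioo (by linarith : (-1:ℝ) < β - 1),
      show β - 1 + 1 = β by ring]
  linarith [h1.trans h2]

include hβ0 hβ1 hM hL hder hgc hgM hgL in
lemma pv_holder {α : ℝ} (hα0 : 0 < α) (hα1 : α ≤ 3*β/4) (x y : ℝ) :
    |pvPhi F x - pvPhi F y| ≤
      (4*M*L*(π^β/β) + 16*M*L*(π^(β/4)/β)) * |x - y| ^ α := by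
  have hC : (0:ℝ) < 4*M*L := by positivity
  have hπβ : (0:ℝ) ≤ 2*M*L*(π^β/β) := by
    have := Real.rpow_nonneg Real.pi_pos.le β
    positivity
  have hπβ4 : (0:ℝ) ≤ 16*M*L*(π^(β/4)/β) := by
    have := Real.rpow_nonneg Real.pi_pos.le (β/4)
    positivity
  rcases eq_or_ne x y with rfl | hxy
  · simp only [sub_self, abs_zero]
    positivity
  have hh : 0 < |x - y| := abs_pos.2 (sub_ne_zero.2 hxy)
  set h := |x - y| with hhdef
  rcases le_or_gt 1 h with hge | hlt
  · -- large distance: use the sup bound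
    have h1 := pv_sup hβ0 hM hL hder hgc hgM hgL x
    have h2 := pv_sup hβ0 hM hL hder hgc hgM hgL y
    have hha : (1:ℝ) ≤ h ^ α := Real.one_le_rpow hge hα0.le
    calc |pvPhi F x - pvPhi F y| ≤ |pvPhi F x| + |pvPhi F y| := abs_sub _ _
      _ ≤ 4*M*L*(π^β/β) := by linarith
      _ = (4*M*L*(π^β/β)) * 1 := by ring
      _ ≤ (4*M*L*(π^β/β) + 16*M*L*(π^(β/4)/β)) * h ^ α := by
          apply mul_le_mul (by linarith) hha zero_le_one
          linarith
  · -- small distance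
    have hIx := pv_integrableOn hβ0 hM hder hgc hgM hgL (F := F) x
    have hIy := pv_integrableOn hβ0 hM hder hgc hgM hgL (F := F) y
    have hdiff : pvPhi F x - pvPhi F y
        = ∫ t in Set.Ioo (0:ℝ) π, (pvSym F x t - pvSym F y t) :=
      (MeasureTheory.integral_sub hIx hIy).symm
    -- pointwise interpolated bound
    have hptw : ∀ t ∈ Set.Ioo (0:ℝ) π, |pvSym F x t - pvSym F y t|
        ≤ (4*M*L * h^(3*β/4)) * t^(β/4 - 1) := by
      intro t ht
      have ht0 := ht.1
      have b1 : |pvSym F x t - pvSym F y t| ≤ (4*M*L) * t^(β-1) := by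
        have h1 := pv_sym_bound hder hgc hgM hgL hβ0 hM.le x ht0
        have h2 := pv_sym_bound hder hgc hgM hgL hβ0 hM.le y ht0
        calc |pvSym F x t - pvSym F y t| ≤ |pvSym F x t| + |pvSym F y t| := abs_sub _ _
          _ ≤ (4*M*L) * t^(β-1) := by linarith
      have b2 : |pvSym F x t - pvSym F y t| ≤ ((4*M*L) * h^β) * t^(-1:ℝ) := by
        have := pv_sym_xdiff hder hgc hgM hgL hM.le x y ht0
        rw [Real.rpow_neg_one]
        calc |pvSym F x t - pvSym F y t| ≤ (1/t) * (4 * M * L * h ^ β) := this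
          _ = 4*M*L*h^β * t⁻¹ := by ring
      have hinterp := abs_le_interp b1 b2
      refine hinterp.trans (le_of_eq ?_)
      have e1 : ((4*M*L) * t^(β-1)) ^ ((1:ℝ)/4)
          = (4*M*L) ^ ((1:ℝ)/4) * t^((β-1)*((1:ℝ)/4)) := by
        rw [Real.mul_rpow hC.le (Real.rpow_nonneg ht0.le _), ← Real.rpow_mul ht0.le]
      have e2 : (((4*M*L) * h^β) * t^(-1:ℝ)) ^ ((3:ℝ)/4)
          = (4*M*L) ^ ((3:ℝ)/4) * h^(β*((3:ℝ)/4)) * t^((-1)*((3:ℝ)/4)) := by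
        rw [Real.mul_rpow (by positivity) (Real.rpow_nonneg ht0.le _),
          Real.mul_rpow hC.le (Real.rpow_nonneg hh.le _),
          ← Real.rpow_mul ht0.le, ← Real.rpow_mul hh.le]
      rw [e1, e2]
      rw [show (4*M*L) ^ ((1:ℝ)/4) * t^((β-1)*((1:ℝ)/4)) *
            ((4*M*L) ^ ((3:ℝ)/4) * h^(β*((3:ℝ)/4)) * t^((-1)*((3:ℝ)/4)))
          = ((4*M*L) ^ ((1:ℝ)/4) * (4*M*L) ^ ((3:ℝ)/4)) * h^(β*((3:ℝ)/4)) *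
            (t^((β-1)*((1:ℝ)/4)) * t^((-1)*((3:ℝ)/4))) by ring]
      rw [← Real.rpow_add hC, ← Real.rpow_add ht0]
      norm_num
      rw [show β * ((3:ℝ) / 4) = 3*β/4 by ring,
        show (β - 1) * ((1:ℝ)/4) + -(3/4) = β/4 - 1 by ring]
    have hintg : IntegrableOn (fun t : ℝ => (4*M*L * h^(3*β/4)) * t^(β/4 - 1))
        (Set.Ioo 0 π) volume :=
      (integrableOn_rpow_Ioo (by linarith : (-1:ℝ) < β/4 - 1)).const_mul _
    have hbound : |pvPhi F x - pvPhi F y|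
        ≤ ∫ t in Set.Ioo (0:ℝ) π, (4*M*L * h^(3*β/4)) * t^(β/4 - 1) := by
      rw [hdiff]
      have hn : |∫ t in Set.Ioo (0:ℝ) π, (pvSym F x t - pvSym F y t)|
          ≤ ∫ t in Set.Ioo (0:ℝ) π, |pvSym F x t - pvSym F y t| := by
        simpa [Real.norm_eq_abs] using
          MeasureTheory.norm_integral_le_integral_norm (μ := volume.restrict (Set.Ioo 0 π))
            (fun t => pvSym F x t - pvSym F y t)
      refine hn.trans ?_
      exact MeasureTheory.setIntegral_mono_on (hIx.sub hIy).abs hintg measurableSet_Ioo hptw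
    have hval : ∫ t in Set.Ioo (0:ℝ) π, (4*M*L * h^(3*β/4)) * t^(β/4 - 1)
        = (16*M*L*(π^(β/4)/β)) * h^(3*β/4) := by
      rw [MeasureTheory.integral_const_mul, integral_rpow_Ioo (by linarith : (-1:ℝ) < β/4 - 1),
        show β/4 - 1 + 1 = β/4 by ring]
      field_simp
      ring
    have hmono : h^(3*β/4) ≤ h^α :=
      Real.rpow_le_rpow_of_exponent_ge hh hlt.le hα1
    calc |pvPhi F x - pvPhi F y| ≤ (16*M*L*(π^(β/4)/β)) * h^(3*β/4) := by
          rw [← hval]; exact hbound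
      _ ≤ (16*M*L*(π^(β/4)/β)) * h^α := mul_le_mul_of_nonneg_left hmono hπβ4
      _ ≤ (4*M*L*(π^β/β) + 16*M*L*(π^(β/4)/β)) * h^α := by
          apply mul_le_mul_of_nonneg_right _ (Real.rpow_nonneg hh.le _)
          linarith

end Integrability
end PV


/-- Let `f ∈ H^s(𝕊)`, `s ∈ (3/2,2)`, and `α := s/2 - 3/4 ∈ (0,1/4)`. Then for each
`τ ∈ [0,1]` the principal value
`φ₆(τf)(x) = PV ∫_{-π}^{π} (1/s')·(1 + ((τf(x)-τf(x-s'))/s')²)⁻¹ ds'`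
exists for every `x`, `φ₆(τf)` is `2π`-periodic and `α`-Hölder continuous, with
Hölder bound uniform in `τ ∈ [0,1]`. -/
theorem phi6_holder (s : ℝ) (hs : s ∈ Set.Ioo (3 / 2 : ℝ) 2)
    (f : ℝ → ℝ) (hf : Continuous f) (hmem : MemHPer s f) :
    ∃ φ : ℝ → ℝ → ℝ,
      (∀ τ ∈ Set.Icc (0 : ℝ) 1, ∀ x : ℝ,
        Tendsto (fun ε : ℝ =>
            ∫ t in {t : ℝ | ε < |t| ∧ |t| < π},
              (1 / t) * (1 + ((τ * f x - τ * f (x - t)) / t) ^ 2)⁻¹)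
          (nhdsWithin 0 (Set.Ioi 0)) (nhds (φ τ x))) ∧
      (∀ τ ∈ Set.Icc (0 : ℝ) 1, Function.Periodic (φ τ) (2 * π)) ∧
      ∃ K : NNReal, ∀ τ ∈ Set.Icc (0 : ℝ) 1,
        HolderWith K (Real.toNNReal (s / 2 - 3 / 4)) (φ τ) := by
  obtain ⟨hs1, hs2⟩ := hs
  set β : ℝ := 2*(2*s - 3)/5 with hβdef
  have hβ0 : 0 < β := by rw [hβdef]; linarith
  have hβ1 : β ≤ 1 := by rw [hβdef]; linarith
  have hβs : 2*(1+β) - 2*s < -1 := by rw [hβdef]; linarith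
  obtain ⟨g, M0, L0, hM0, hL0, hgc, hder, hgM, hgL⟩ :=
    deriv_structure s β hs1 hβ0 hβ1 hβs f hf hmem
  set M : ℝ := M0 + 1 with hMdef
  set L : ℝ := L0 + 1 with hLdef
  have hM : (0:ℝ) < M := by rw [hMdef]; linarith
  have hL : (0:ℝ) < L := by rw [hLdef]; linarith
  have hgM' : ∀ x, |g x| ≤ M := fun x => (hgM x).trans (by rw [hMdef]; linarith)
  have hgL' : ∀ x y : ℝ, |g x - g y| ≤ L * |x - y| ^ β := fun x y =>
    (hgL x y).trans (mul_le_mul_of_nonneg_right (by rw [hLdef]; linarith)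
      (Real.rpow_nonneg (abs_nonneg _) _))
  have hα0 : (0:ℝ) < s / 2 - 3 / 4 := by linarith
  have hα1 : s / 2 - 3 / 4 ≤ 3*β/4 := by rw [hβdef]; linarith
  -- data for scaled functions
  have hdata : ∀ τ ∈ Set.Icc (0:ℝ) 1,
      (∀ x, HasDerivAt (fun y => τ * f y) (τ * g x) x) ∧
      Continuous (fun x => τ * g x) ∧ (∀ x, |τ * g x| ≤ M) ∧
      (∀ x y : ℝ, |τ * g x - τ * g y| ≤ L * |x - y| ^ β) := by
    intro τ hτ
    have hτ1 : |τ| ≤ 1 := by rw [abs_of_nonneg hτ.1]; exact hτ.2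
    refine ⟨fun x => (hder x).const_mul τ, continuous_const.mul hgc, fun x => ?_, fun x y => ?_⟩
    · rw [abs_mul]
      calc |τ| * |g x| ≤ 1 * M := mul_le_mul hτ1 (hgM' x) (abs_nonneg _) zero_le_one
        _ = M := one_mul M
    · rw [← mul_sub, abs_mul]
      calc |τ| * |g x - g y| ≤ 1 * (L * |x - y| ^ β) :=
            mul_le_mul hτ1 (hgL' x y) (abs_nonneg _) zero_le_one
        _ = L * |x - y| ^ β := one_mul _
  refine ⟨fun τ => pvPhi (fun y => τ * f y), ?_, ?_, ?_⟩
  · intro τ hτ x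
    obtain ⟨h1, h2, h3, h4⟩ := hdata τ hτ
    exact pv_tendsto hβ0 hM hL h1 h2 h3 h4 x
  · intro τ hτ
    have hper : Function.Periodic (fun y => τ * f y) (2*π) := fun x => by
      simp [hmem.1 x]
    exact pv_periodic hper
  · refine ⟨(4*M*L*(π^β/β) + 16*M*L*(π^(β/4)/β)).toNNReal, fun τ hτ => ?_⟩
    obtain ⟨h1, h2, h3, h4⟩ := hdata τ hτ
    have hKnn : (0:ℝ) ≤ 4*M*L*(π^β/β) + 16*M*L*(π^(β/4)/β) := by
      have b1 := Real.rpow_nonneg Real.pi_pos.le β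
      have b2 := Real.rpow_nonneg Real.pi_pos.le (β/4)
      positivity
    exact holderWith_of_dist_le hKnn hα0.le
      (fun x y => pv_holder hβ0 hβ1 hM hL h1 h2 h3 h4 hα0 hα1 x y)
end

section
/- Let f ∈ H^2(𝕊) be real-valued and define ω̄ := -(k Δρ / μ) f' ∈ H^1(𝕊), where k, Δρ, μ > 0 are constants. Define for (x, y) ∈ ℝ² with y ≠ f(x): ṽ¹(x,y) := -(1/4π) ∫_{-π}^{π} ω̄(s) · tanh((y - f(s))/2)(1 + tan²((x-s)/2)) / (tan²((x-s)/2) + tanh²((y-f(s))/2)) ds and ṽ²(x,y) := (1/4π) ∫_{-π}^{π} ω̄(s) · tan((x-s)/2)(1 - tanh²((y-f(s))/2)) / (tan²((x-s)/2) + tanh²((y-f(s))/2)) ds. Then ṽ = (ṽ¹, ṽ²) is C¹ on ℝ² \ {y = f(x)}, is 2π-periodic in x, and satisfies div ṽ = 0 and rot ṽ = ∂_x ṽ² - ∂_y ṽ¹ = 0 on each of the open regions {y < f(x)} and {y > f(x)}. -/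
open MeasureTheory Real

/-! ### Auxiliary algebraic lemmas -/

section AuxAlgebra

variable (a b : ℝ)

private lemma aux_e2 (hca : Real.cos a ≠ 0) : 1 + Real.tan a ^ 2 = 1 / Real.cos a ^ 2 := by
  rw [Real.tan_eq_sin_div_cos]; field_simp; linear_combination Real.sin_sq_add_cos_sq a

private lemma aux_e3 : 1 - Real.tanh b ^ 2 = 1 / Real.cosh b ^ 2 := by
  have hch : Real.cosh b ≠ 0 := (Real.cosh_pos b).ne'
  rw [Real.tanh_eq_sinh_div_cosh]; field_simp; linear_combination Real.cosh_sq_sub_sinh_sq b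

private lemma aux_e1 (hca : Real.cos a ≠ 0) : Real.tan a ^ 2 + Real.tanh b ^ 2
    = (Real.sin a ^ 2 + Real.sinh b ^ 2) / (Real.cos a ^ 2 * Real.cosh b ^ 2) := by
  have hch : Real.cosh b ≠ 0 := (Real.cosh_pos b).ne'
  rw [Real.tan_eq_sin_div_cos, Real.tanh_eq_sinh_div_cosh]; field_simp
  linear_combination (Real.sinh b ^ 2 * (Real.sin_sq_add_cos_sq a))
    + Real.sin a ^ 2 * (Real.cosh_sq_sub_sinh_sq b)

private lemma aux_clean1 (hca : Real.cos a ≠ 0)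
    (hD : Real.sin a ^ 2 + Real.sinh b ^ 2 ≠ 0) :
    Real.tanh b * (1 + Real.tan a ^ 2) / (Real.tan a ^ 2 + Real.tanh b ^ 2)
      = Real.sinh b * Real.cosh b / (Real.sin a ^ 2 + Real.sinh b ^ 2) := by
  have hch : Real.cosh b ≠ 0 := (Real.cosh_pos b).ne'
  rw [aux_e1 a b hca, aux_e2 a hca, Real.tanh_eq_sinh_div_cosh]
  field_simp

private lemma aux_clean2 (hca : Real.cos a ≠ 0)
    (hD : Real.sin a ^ 2 + Real.sinh b ^ 2 ≠ 0) :
    Real.tan a * (1 - Real.tanh b ^ 2) / (Real.tan a ^ 2 + Real.tanh b ^ 2)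
      = Real.sin a * Real.cos a / (Real.sin a ^ 2 + Real.sinh b ^ 2) := by
  have hch : Real.cosh b ≠ 0 := (Real.cosh_pos b).ne'
  rw [aux_e1 a b hca, aux_e3 b, Real.tan_eq_sin_div_cos]
  field_simp

private lemma aux_cotid (hD : Real.sin a ^ 2 + Real.sinh b ^ 2 ≠ 0) :
    Complex.cos ((a : ℂ) - (b : ℂ) * Complex.I) / Complex.sin ((a : ℂ) - (b : ℂ) * Complex.I)
      = ((Real.sin a * Real.cos a / (Real.sin a ^ 2 + Real.sinh b ^ 2) : ℝ) : ℂ)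
        + ((Real.sinh b * Real.cosh b / (Real.sin a ^ 2 + Real.sinh b ^ 2) : ℝ) : ℂ)
          * Complex.I := by
  have hch : Real.cosh b ≠ 0 := (Real.cosh_pos b).ne'
  have hs : Complex.sin ((a : ℂ) - (b : ℂ) * Complex.I)
      = ((Real.sin a * Real.cosh b : ℝ) : ℂ)
        - ((Real.cos a * Real.sinh b : ℝ) : ℂ) * Complex.I := by
    rw [show (a : ℂ) - (b : ℂ) * Complex.I = (a : ℂ) + ((-b : ℝ) : ℂ) * Complex.I by
      push_cast; ring, Complex.sin_add_mul_I]
    rw [Complex.ofReal_neg, Complex.cosh_neg, Complex.sinh_neg,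
      ← Complex.ofReal_sin, ← Complex.ofReal_cos, ← Complex.ofReal_cosh, ← Complex.ofReal_sinh]
    push_cast
    ring
  have hc : Complex.cos ((a : ℂ) - (b : ℂ) * Complex.I)
      = ((Real.cos a * Real.cosh b : ℝ) : ℂ)
        + ((Real.sin a * Real.sinh b : ℝ) : ℂ) * Complex.I := by
    rw [show (a : ℂ) - (b : ℂ) * Complex.I = (a : ℂ) + ((-b : ℝ) : ℂ) * Complex.I by
      push_cast; ring, Complex.cos_add_mul_I]
    rw [Complex.ofReal_neg, Complex.cosh_neg, Complex.sinh_neg,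
      ← Complex.ofReal_sin, ← Complex.ofReal_cos, ← Complex.ofReal_cosh, ← Complex.ofReal_sinh]
    push_cast
    ring
  have hsne : Complex.sin ((a : ℂ) - (b : ℂ) * Complex.I) ≠ 0 := by
    rw [hs]
    intro h0
    rw [Complex.ext_iff] at h0
    simp only [Complex.sub_re, Complex.sub_im, Complex.mul_re, Complex.mul_im,
      Complex.ofReal_re, Complex.ofReal_im, Complex.I_re, Complex.I_im, Complex.zero_re,
      Complex.zero_im] at h0
    obtain ⟨h1, h2⟩ := h0
    apply hD
    have h1' : Real.sin a * Real.cosh b = 0 := by linarith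
    have h2' : Real.cos a * Real.sinh b = 0 := by linarith
    have hsa : Real.sin a = 0 := by
      rcases mul_eq_zero.mp h1' with h | h
      · exact h
      · exact absurd h hch
    have hcane : Real.cos a ≠ 0 := by
      intro hc0
      have := Real.sin_sq_add_cos_sq a
      rw [hsa, hc0] at this; norm_num at this
    have hsb : Real.sinh b = 0 := by
      rcases mul_eq_zero.mp h2' with h | h
      · exact absurd h hcane
      · exact h
    rw [hsa, hsb]; ring
  rw [div_eq_iff hsne, hs, hc]
  rw [Complex.ext_iff]
  constructor
  · simp only [Complex.add_re, Complex.add_im, Complex.sub_re, Complex.sub_im, Complex.mul_re,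
      Complex.mul_im, Complex.ofReal_re, Complex.ofReal_im, Complex.I_re, Complex.I_im]
    ring_nf
    field_simp
  · simp only [Complex.add_re, Complex.add_im, Complex.sub_re, Complex.sub_im, Complex.mul_re,
      Complex.mul_im, Complex.ofReal_re, Complex.ofReal_im, Complex.I_re, Complex.I_im]
    ring_nf
    field_simp
    linear_combination (Real.sin a * Real.sinh b) *
        (Real.sin_sq_add_cos_sq a) -
      (Real.sin a * Real.sinh b) *
        (Real.cosh_sq_sub_sinh_sq b)

end AuxAlgebra

/-! ### Complex-analytic setup -/

section AuxComplex

/-- The point on the (conjugated) interface curve. -/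
noncomputable def auxZeta (f : ℝ → ℝ) (s : ℝ) : ℂ := (s : ℂ) - (f s : ℂ) * Complex.I

/-- The integrand `ω(s) cot((w - ζ(s))/2)`. -/
noncomputable def auxG (ω f : ℝ → ℝ) (w : ℂ) (s : ℝ) : ℂ :=
  (ω s : ℂ) * (Complex.cos ((w - auxZeta f s) / 2) / Complex.sin ((w - auxZeta f s) / 2))

/-- Its `w`-derivative. -/
noncomputable def auxG' (ω f : ℝ → ℝ) (w : ℂ) (s : ℝ) : ℂ :=
  (ω s : ℂ) * (-(1 / 2) / Complex.sin ((w - auxZeta f s) / 2) ^ 2)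

/-- The complex velocity potential integral. -/
noncomputable def auxPhi (ω f : ℝ → ℝ) (w : ℂ) : ℂ := ∫ s in (-π)..π, auxG ω f w s

/-- The complex domain corresponding to the complement of the graph of `f`. -/
def auxW (f : ℝ → ℝ) : Set ℂ := {w : ℂ | w.im ≠ -f w.re}

lemma auxW_open {f : ℝ → ℝ} (hf : Continuous f) : IsOpen (auxW f) := by
  have : auxW f = (fun w : ℂ => w.im + f w.re) ⁻¹' {x : ℝ | x ≠ 0} := by
    ext w
    simp only [auxW, Set.mem_setOf_eq, Set.mem_preimage]
    constructor
    · intro h h0; exact h (by linarith)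
    · intro h h0; exact h (by rw [h0]; ring)
  rw [this]
  exact (isOpen_ne.preimage (Complex.continuous_im.add (hf.comp Complex.continuous_re)))

lemma auxZeta_continuous {f : ℝ → ℝ} (hf : Continuous f) : Continuous (auxZeta f) :=
  Complex.continuous_ofReal.sub ((Complex.continuous_ofReal.comp hf).mul continuous_const)

lemma aux_sin_ne {f : ℝ → ℝ} (hper : Function.Periodic f (2 * π)) {w : ℂ}
    (hw : w ∈ auxW f) (s : ℝ) : Complex.sin ((w - auxZeta f s) / 2) ≠ 0 := by
  intro h0
  rw [Complex.sin_eq_zero_iff] at h0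
  obtain ⟨n, hn⟩ := h0
  have hw' : w = auxZeta f s + 2 * n * π := by
    have : w - auxZeta f s = 2 * n * π := by
      field_simp at hn
      rw [hn]
    linear_combination this
  apply hw
  have hre : w.re = s + 2 * n * π := by
    rw [hw']; simp [auxZeta]
  have him : w.im = -f s := by
    rw [hw']; simp [auxZeta]
  rw [him, hre]
  have : f (s + 2 * n * π) = f s := by
    have := (hper.int_mul n) s
    rw [show s + 2 * n * π = s + n * (2 * π) by ring]
    exact this
  rw [this]

lemma aux_D_ne {f : ℝ → ℝ} (hper : Function.Periodic f (2 * π)) {x y : ℝ}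
    (h : y ≠ f x) (s : ℝ) :
    Real.sin ((x - s) / 2) ^ 2 + Real.sinh ((y - f s) / 2) ^ 2 ≠ 0 := by
  intro h0
  have h1 : Real.sin ((x - s) / 2) = 0 := by
    nlinarith [sq_nonneg (Real.sin ((x - s) / 2)), sq_nonneg (Real.sinh ((y - f s) / 2))]
  have h2 : Real.sinh ((y - f s) / 2) = 0 := by
    nlinarith [sq_nonneg (Real.sin ((x - s) / 2)), sq_nonneg (Real.sinh ((y - f s) / 2))]
  rw [Real.sin_eq_zero_iff] at h1
  obtain ⟨n, hn⟩ := h1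
  have hs : s = x - n * (2 * π) := by linarith [hn]
  have hy : y = f s := by
    have := Real.sinh_eq_zero.mp h2
    linarith
  apply h
  rw [hy, hs]
  have := (hper.int_mul (-n)) x
  rw [show x - n * (2 * π) = x + (-n : ℤ) * (2 * π) by push_cast; ring]
  exact this

lemma auxG_continuous {ω f : ℝ → ℝ} (hω : Continuous ω) (hf : Continuous f)
    (hper : Function.Periodic f (2 * π)) {w : ℂ} (hw : w ∈ auxW f) :
    Continuous (auxG ω f w) := by
  have hcs : Continuous fun s => (w - auxZeta f s) / 2 :=
    (continuous_const.sub (auxZeta_continuous hf)).div_const 2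
  exact (Complex.continuous_ofReal.comp hω).mul
    ((Complex.continuous_cos.comp hcs).div (Complex.continuous_sin.comp hcs)
      fun s => aux_sin_ne hper hw s)

lemma auxG'_continuous {ω f : ℝ → ℝ} (hω : Continuous ω) (hf : Continuous f)
    (hper : Function.Periodic f (2 * π)) {w : ℂ} (hw : w ∈ auxW f) :
    Continuous (auxG' ω f w) := by
  have hcs : Continuous fun s => (w - auxZeta f s) / 2 :=
    (continuous_const.sub (auxZeta_continuous hf)).div_const 2
  exact (Complex.continuous_ofReal.comp hω).mul
    (continuous_const.div ((Complex.continuous_sin.comp hcs).pow 2)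
      fun s => pow_ne_zero 2 (aux_sin_ne hper hw s))

set_option maxHeartbeats 1000000 in
/-- Differentiation under the integral sign for `auxPhi`. -/
lemma auxPhi_hasDerivAt {ω f : ℝ → ℝ} (hω : Continuous ω) (hf : Continuous f)
    (hper : Function.Periodic f (2 * π)) {w₀ : ℂ} (hw₀ : w₀ ∈ auxW f) :
    HasDerivAt (auxPhi ω f) (∫ s in (-π)..π, auxG' ω f w₀ s) w₀ := by
  obtain ⟨r, hr, hball⟩ := Metric.isOpen_iff.mp (auxW_open hf) w₀ hw₀
  set ε := r / 2 with hε
  have hε_pos : 0 < ε := by positivity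
  have hsubW : Metric.closedBall w₀ ε ⊆ auxW f := fun z hz =>
    hball (lt_of_le_of_lt (Metric.mem_closedBall.mp hz) (by linarith))
  -- uniform lower bound for the denominator
  set φ : ℂ × ℝ → ℝ := fun q => ‖Complex.sin ((q.1 - auxZeta f q.2) / 2)‖ with hφ
  have hφc : Continuous φ := by
    apply Continuous.norm
    exact Complex.continuous_sin.comp
      ((continuous_fst.sub ((auxZeta_continuous hf).comp continuous_snd)).div_const 2)
  have hKc : IsCompact (Metric.closedBall w₀ ε ×ˢ Set.Icc (-π) π) :=
    (isCompact_closedBall w₀ ε).prod isCompact_Icc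
  have hKne : (Metric.closedBall w₀ ε ×ˢ Set.Icc (-π) π).Nonempty := by
    refine ⟨(w₀, 0), Set.mem_prod.mpr ⟨Metric.mem_closedBall_self hε_pos.le, ?_⟩⟩
    refine Set.mem_Icc.mpr ⟨?_, Real.pi_pos.le⟩
    simpa using Real.pi_pos.le
  obtain ⟨q₀, hq₀K, hq₀min⟩ := hKc.exists_isMinOn hKne hφc.continuousOn
  set m : ℝ := φ q₀ with hm
  have hm_pos : 0 < m := by
    rw [hm, hφ]
    simp only [norm_pos_iff]
    exact aux_sin_ne hper (hsubW (Set.mem_prod.mp hq₀K).1) q₀.2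
  -- the dominated-derivative argument
  have key := intervalIntegral.hasDerivAt_integral_of_dominated_loc_of_deriv_le
    (F := auxG ω f) (F' := auxG' ω f) (x₀ := w₀) (a := -π) (b := π)
    (bound := fun s => |ω s| * (1 / 2 / m ^ 2)) (μ := volume) (Metric.ball_mem_nhds w₀ hε_pos)
    ?_ ?_ ?_ ?_ ?_ ?_
  · exact key.2
  · filter_upwards [ (auxW_open hf).mem_nhds hw₀ ] with x hx
    exact (auxG_continuous hω hf hper hx).aestronglyMeasurable
  · exact (auxG_continuous hω hf hper hw₀).intervalIntegrable _ _
  · exact (auxG'_continuous hω hf hper hw₀).aestronglyMeasurable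
  · refine Filter.Eventually.of_forall fun t ht x hx => ?_
    have htI : t ∈ Set.Icc (-π) π := by
      rw [Set.uIoc_of_le (by linarith [Real.pi_pos] : -π ≤ π)] at ht
      exact Set.mem_Icc.mpr ⟨ht.1.le, ht.2⟩
    have hxK : (x, t) ∈ Metric.closedBall w₀ ε ×ˢ Set.Icc (-π) π :=
      Set.mem_prod.mpr ⟨Metric.ball_subset_closedBall hx, htI⟩
    have hmle : m ≤ ‖Complex.sin ((x - auxZeta f t) / 2)‖ :=
      isMinOn_iff.mp hq₀min (x, t) hxK
    have hnorm : ‖auxG' ω f x t‖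
        = |ω t| * (1 / 2 / ‖Complex.sin ((x - auxZeta f t) / 2)‖ ^ 2) := by
      rw [auxG', norm_mul, Complex.norm_real, norm_div, norm_neg, norm_pow]
      norm_num
    rw [hnorm]
    refine mul_le_mul_of_nonneg_left ?_ (abs_nonneg _)
    apply div_le_div_of_nonneg_left (by norm_num) (by positivity)
    have : m ^ 2 ≤ ‖Complex.sin ((x - auxZeta f t) / 2)‖ ^ 2 :=
      pow_le_pow_left₀ hm_pos.le hmle 2
    linarith
  · exact ((hω.abs.mul continuous_const)).intervalIntegrable _ _
  · refine Filter.Eventually.of_forall fun t _ x hx => ?_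
    have hxW : x ∈ auxW f := hsubW (Metric.ball_subset_closedBall hx)
    have hne : Complex.sin ((x - auxZeta f t) / 2) ≠ 0 := aux_sin_ne hper hxW t
    have hu : HasDerivAt (fun y : ℂ => (y - auxZeta f t) / 2) (1 / 2) x := by
      simpa using ((hasDerivAt_id x).sub_const (auxZeta f t)).div_const 2
    have hsin : HasDerivAt (fun y : ℂ => Complex.sin ((y - auxZeta f t) / 2))
        (Complex.cos ((x - auxZeta f t) / 2) * (1 / 2)) x :=
      (Complex.hasDerivAt_sin _).comp x hu
    have hcos : HasDerivAt (fun y : ℂ => Complex.cos ((y - auxZeta f t) / 2))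
        (-Complex.sin ((x - auxZeta f t) / 2) * (1 / 2)) x :=
      (Complex.hasDerivAt_cos _).comp x hu
    have hdiv := (hcos.div hsin hne).const_mul ((ω t : ℂ))
    convert hdiv using 1
    · rfl
    · rfl
    rw [auxG']
    congr 1
    set S := Complex.sin ((x - auxZeta f t) / 2)
    set C := Complex.cos ((x - auxZeta f t) / 2)
    have hS2 : S ^ 2 ≠ 0 := pow_ne_zero 2 hne
    rw [div_eq_div_iff hS2 hS2]
    have hpy : S ^ 2 + C ^ 2 = 1 := Complex.sin_sq_add_cos_sq _
    linear_combination ((1 / 2) * S ^ 2) * hpy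

end AuxComplex

/-- Let `f ∈ H²(𝕊)` and `ω̄ := -(kΔρ/μ) f'`. The velocity field `ṽ = (ṽ¹, ṽ²)` defined
by the periodic contour integrals is `C¹` off the graph of `f`, `2π`-periodic in `x`, and
satisfies `div ṽ = 0` and `rot ṽ = 0` in both open regions `{y < f(x)}` and `{y > f(x)}`. -/
theorem velocity_field_div_rot_free (k Δρ μ : ℝ) (hk : 0 < k) (hΔ : 0 < Δρ) (hμ : 0 < μ)
    (f : ℝ → ℝ) (hf : ContDiff ℝ 1 f) (hper : Function.Periodic f (2 * π))
    (hH2 : Summable fun m : ℤ =>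
      (1 + (m : ℝ) ^ 2) ^ (2 : ℝ) * ‖periodicFourierCoeff f m‖ ^ 2)
    (v1 v2 : ℝ × ℝ → ℝ)
    (hv1 : ∀ p : ℝ × ℝ, v1 p = -(1 / (4 * π)) *
      ∫ s in (-π)..π, (-(k * Δρ / μ) * deriv f s) *
        (Real.tanh ((p.2 - f s) / 2) * (1 + Real.tan ((p.1 - s) / 2) ^ 2)) /
          (Real.tan ((p.1 - s) / 2) ^ 2 + Real.tanh ((p.2 - f s) / 2) ^ 2))
    (hv2 : ∀ p : ℝ × ℝ, v2 p = (1 / (4 * π)) *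
      ∫ s in (-π)..π, (-(k * Δρ / μ) * deriv f s) *
        (Real.tan ((p.1 - s) / 2) * (1 - Real.tanh ((p.2 - f s) / 2) ^ 2)) /
          (Real.tan ((p.1 - s) / 2) ^ 2 + Real.tanh ((p.2 - f s) / 2) ^ 2)) :
    ContDiffOn ℝ 1 v1 {p : ℝ × ℝ | p.2 ≠ f p.1} ∧
    ContDiffOn ℝ 1 v2 {p : ℝ × ℝ | p.2 ≠ f p.1} ∧
    (∀ p : ℝ × ℝ, v1 (p.1 + 2 * π, p.2) = v1 p ∧ v2 (p.1 + 2 * π, p.2) = v2 p) ∧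
    (∀ p ∈ {p : ℝ × ℝ | p.2 ≠ f p.1},
      fderiv ℝ v1 p (1, 0) + fderiv ℝ v2 p (0, 1) = 0 ∧
      fderiv ℝ v2 p (1, 0) - fderiv ℝ v1 p (0, 1) = 0) := by
  have hfc : Continuous f := hf.continuous
  set U : Set (ℝ × ℝ) := {p : ℝ × ℝ | p.2 ≠ f p.1} with hUdef
  have hUopen : IsOpen U := by
    have : U = (fun p : ℝ × ℝ => p.2 - f p.1) ⁻¹' {x : ℝ | x ≠ 0} := by
      ext p
      simp [hUdef, sub_eq_zero]
    rw [this]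
    exact isOpen_ne.preimage (continuous_snd.sub (hfc.comp continuous_fst))
  set ω : ℝ → ℝ := fun s => -(k * Δρ / μ) * deriv f s with hωdef
  have hω : Continuous ω := continuous_const.mul (hf.continuous_deriv le_rfl)
  set mm : ℝ × ℝ → ℂ := fun p => (p.1 : ℂ) - (p.2 : ℂ) * Complex.I with hmmdef
  have hmmW : ∀ p ∈ U, mm p ∈ auxW f := by
    intro p hp
    have h1 : (mm p).re = p.1 := by simp [hmmdef]
    have h2 : (mm p).im = -p.2 := by simp [hmmdef]
    simp only [auxW, Set.mem_setOf_eq, h1, h2]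
    intro h0
    exact hp (by linarith)
  -- the integrands agree a.e.
  have hGim : ∀ p ∈ U, ∀ᵐ s : ℝ, s ∈ Set.uIoc (-π) π →
      (ω s * (Real.tanh ((p.2 - f s) / 2) * (1 + Real.tan ((p.1 - s) / 2) ^ 2)) /
        (Real.tan ((p.1 - s) / 2) ^ 2 + Real.tanh ((p.2 - f s) / 2) ^ 2)
        = (auxG ω f (mm p) s).im) ∧
      (ω s * (Real.tan ((p.1 - s) / 2) * (1 - Real.tanh ((p.2 - f s) / 2) ^ 2)) /
        (Real.tan ((p.1 - s) / 2) ^ 2 + Real.tanh ((p.2 - f s) / 2) ^ 2)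
        = (auxG ω f (mm p) s).re) := by
    intro p hp
    have hBcount : ({s : ℝ | Real.cos ((p.1 - s) / 2) = 0}).Countable := by
      have : {s : ℝ | Real.cos ((p.1 - s) / 2) = 0}
          ⊆ Set.range (fun n : ℤ => p.1 - (2 * n + 1) * π) := by
        intro s hs
        rw [Set.mem_setOf_eq, Real.cos_eq_zero_iff] at hs
        obtain ⟨n, hn⟩ := hs
        exact ⟨n, by push_cast at hn ⊢; linarith⟩
      exact Set.Countable.mono this (Set.countable_range _)
    have hae : ∀ᵐ s : ℝ, s ∉ {s : ℝ | Real.cos ((p.1 - s) / 2) = 0} :=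
      measure_eq_zero_iff_ae_notMem.mp (hBcount.measure_zero volume)
    filter_upwards [hae] with s hs _
    have hca : Real.cos ((p.1 - s) / 2) ≠ 0 := hs
    have hD : Real.sin ((p.1 - s) / 2) ^ 2 + Real.sinh ((p.2 - f s) / 2) ^ 2 ≠ 0 :=
      aux_D_ne hper hp s
    have hu : (mm p - auxZeta f s) / 2
        = (((p.1 - s) / 2 : ℝ) : ℂ) - (((p.2 - f s) / 2 : ℝ) : ℂ) * Complex.I := by
      rw [hmmdef, auxZeta]
      push_cast
      ring
    have hGval : auxG ω f (mm p) s
        = (ω s : ℂ) * ((((Real.sin ((p.1 - s) / 2) * Real.cos ((p.1 - s) / 2) /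
              (Real.sin ((p.1 - s) / 2) ^ 2 + Real.sinh ((p.2 - f s) / 2) ^ 2)) : ℝ) : ℂ)
            + (((Real.sinh ((p.2 - f s) / 2) * Real.cosh ((p.2 - f s) / 2) /
              (Real.sin ((p.1 - s) / 2) ^ 2 + Real.sinh ((p.2 - f s) / 2) ^ 2)) : ℝ) : ℂ)
              * Complex.I) := by
      rw [auxG, hu, aux_cotid _ _ hD]
    constructor
    · rw [hGval, mul_div_assoc, aux_clean1 _ _ hca hD]
      simp only [Complex.mul_im, Complex.mul_re, Complex.add_im, Complex.add_re,
        Complex.ofReal_re, Complex.ofReal_im, Complex.I_re, Complex.I_im]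
      ring
    · rw [hGval, mul_div_assoc, aux_clean2 _ _ hca hD]
      simp only [Complex.mul_im, Complex.mul_re, Complex.add_im, Complex.add_re,
        Complex.ofReal_re, Complex.ofReal_im, Complex.I_re, Complex.I_im]
      ring
  have hGint : ∀ p ∈ U, IntervalIntegrable (auxG ω f (mm p)) volume (-π) π :=
    fun p hp => (auxG_continuous hω hfc hper (hmmW p hp)).intervalIntegrable _ _
  -- identification of v1, v2 with the imaginary and real parts of auxPhi
  have him : ∀ p ∈ U, v1 p = -(1 / (4 * π)) * (auxPhi ω f (mm p)).im := by
    intro p hp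
    rw [hv1 p]
    congr 1
    have h1 : ∫ s in (-π)..π, (auxG ω f (mm p) s).im = (auxPhi ω f (mm p)).im := by
      have := Complex.imCLM.intervalIntegral_comp_comm (hGint p hp)
      simpa [auxPhi] using this
    rw [← h1]
    apply intervalIntegral.integral_congr_ae
    filter_upwards [hGim p hp] with s hss hsmem
    exact (hss hsmem).1
  have hre : ∀ p ∈ U, v2 p = (1 / (4 * π)) * (auxPhi ω f (mm p)).re := by
    intro p hp
    rw [hv2 p]
    congr 1
    have h1 : ∫ s in (-π)..π, (auxG ω f (mm p) s).re = (auxPhi ω f (mm p)).re := by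
      have := Complex.reCLM.intervalIntegral_comp_comm (hGint p hp)
      simpa [auxPhi] using this
    rw [← h1]
    apply intervalIntegral.integral_congr_ae
    filter_upwards [hGim p hp] with s hss hsmem
    exact (hss hsmem).2
  -- smoothness
  have hPhiC : ContDiffOn ℝ 1 (fun p => auxPhi ω f (mm p)) U := by
    have h1 : DifferentiableOn ℂ (auxPhi ω f) (auxW f) := fun w hw =>
      (auxPhi_hasDerivAt hω hfc hper hw).differentiableAt.differentiableWithinAt
    have h2 : ContDiffOn ℂ 1 (auxPhi ω f) (auxW f) := h1.contDiffOn (auxW_open hfc)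
    have h3 : ContDiffOn ℝ 1 (auxPhi ω f) (auxW f) := h2.restrict_scalars ℝ
    have hmmC : ContDiff ℝ 1 mm := by
      apply ContDiff.sub
      · exact Complex.ofRealCLM.contDiff.comp contDiff_fst
      · exact (Complex.ofRealCLM.contDiff.comp contDiff_snd).mul contDiff_const
    exact h3.comp hmmC.contDiffOn (fun p hp => hmmW p hp)
  have hg1C : ContDiffOn ℝ 1 (fun p => -(1 / (4 * π)) * (auxPhi ω f (mm p)).im) U :=
    contDiffOn_const.mul (Complex.imCLM.contDiff.comp_contDiffOn hPhiC)
  have hg2C : ContDiffOn ℝ 1 (fun p => (1 / (4 * π)) * (auxPhi ω f (mm p)).re) U :=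
    contDiffOn_const.mul (Complex.reCLM.contDiff.comp_contDiffOn hPhiC)
  refine ⟨hg1C.congr him, hg2C.congr hre, ?_, ?_⟩
  · -- periodicity
    intro p
    constructor
    · rw [hv1 (p.1 + 2 * π, p.2), hv1 p]
      congr 1
      apply intervalIntegral.integral_congr
      intro s _
      have h2 : (p.1 + 2 * π - s) / 2 = (p.1 - s) / 2 + π := by ring
      have h3 := Real.tan_periodic ((p.1 - s) / 2)
      simp only [h2, h3]
    · rw [hv2 (p.1 + 2 * π, p.2), hv2 p]
      congr 1
      apply intervalIntegral.integral_congr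
      intro s _
      have h2 : (p.1 + 2 * π - s) / 2 = (p.1 - s) / 2 + π := by ring
      have h3 := Real.tan_periodic ((p.1 - s) / 2)
      simp only [h2, h3]
  · -- divergence- and rotation-free
    intro p hp
    set c : ℂ := ∫ s in (-π)..π, auxG' ω f (mm p) s with hcdef
    have hΦd : HasDerivAt (auxPhi ω f) c (mm p) := auxPhi_hasDerivAt hω hfc hper (hmmW p hp)
    set M : (ℝ × ℝ) →L[ℝ] ℂ :=
      (ContinuousLinearMap.fst ℝ ℝ ℝ).smulRight (1 : ℂ)
        + (ContinuousLinearMap.snd ℝ ℝ ℝ).smulRight (-Complex.I) with hMdef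
    have hMev : ∀ q : ℝ × ℝ, mm q = M q := by
      intro q
      simp only [hMdef, hmmdef, ContinuousLinearMap.add_apply,
        ContinuousLinearMap.smulRight_apply, ContinuousLinearMap.coe_fst',
        ContinuousLinearMap.coe_snd', Complex.real_smul]
      push_cast
      ring
    have hmmF : HasFDerivAt mm M p :=
      (M.hasFDerivAt (x := p)).congr_of_eventuallyEq
        (Filter.Eventually.of_forall fun q => hMev q)
    have hcomp : HasFDerivAt (fun q => auxPhi ω f (mm q))
        ((((1 : ℂ →L[ℂ] ℂ).smulRight c).restrictScalars ℝ).comp M) p :=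
      (hΦd.hasFDerivAt.restrictScalars ℝ).comp p hmmF
    have hg1F : HasFDerivAt (fun q => -(1 / (4 * π)) * (auxPhi ω f (mm q)).im)
        ((-(1 / (4 * π))) • (Complex.imCLM.comp
          ((((1 : ℂ →L[ℂ] ℂ).smulRight c).restrictScalars ℝ).comp M))) p :=
      (Complex.imCLM.hasFDerivAt.comp p hcomp).const_mul (-(1 / (4 * π)))
    have hg2F : HasFDerivAt (fun q => (1 / (4 * π)) * (auxPhi ω f (mm q)).re)
        ((1 / (4 * π)) • (Complex.reCLM.comp
          ((((1 : ℂ →L[ℂ] ℂ).smulRight c).restrictScalars ℝ).comp M))) p :=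
      (Complex.reCLM.hasFDerivAt.comp p hcomp).const_mul (1 / (4 * π))
    have hev1 : v1 =ᶠ[nhds p] fun q => -(1 / (4 * π)) * (auxPhi ω f (mm q)).im :=
      Filter.eventuallyEq_of_mem (hUopen.mem_nhds hp) him
    have hev2 : v2 =ᶠ[nhds p] fun q => (1 / (4 * π)) * (auxPhi ω f (mm q)).re :=
      Filter.eventuallyEq_of_mem (hUopen.mem_nhds hp) hre
    have hfd1 : fderiv ℝ v1 p = (-(1 / (4 * π))) • (Complex.imCLM.comp
        ((((1 : ℂ →L[ℂ] ℂ).smulRight c).restrictScalars ℝ).comp M)) := by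
      rw [hev1.fderiv_eq]
      exact hg1F.fderiv
    have hfd2 : fderiv ℝ v2 p = (1 / (4 * π)) • (Complex.reCLM.comp
        ((((1 : ℂ →L[ℂ] ℂ).smulRight c).restrictScalars ℝ).comp M)) := by
      rw [hev2.fderiv_eq]
      exact hg2F.fderiv
    have hM10 : M (1, 0) = 1 := by
      simp [hMdef]
    have hM01 : M (0, 1) = -Complex.I := by
      simp [hMdef]
    constructor
    · rw [hfd1, hfd2]
      simp only [ContinuousLinearMap.smul_apply, ContinuousLinearMap.comp_apply,
        ContinuousLinearMap.coe_restrictScalars', hM10, hM01,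
        ContinuousLinearMap.smulRight_apply, ContinuousLinearMap.one_apply,
        Complex.imCLM_apply, Complex.reCLM_apply, smul_eq_mul]
      simp [Complex.mul_im, Complex.mul_re]
    · rw [hfd1, hfd2]
      simp only [ContinuousLinearMap.smul_apply, ContinuousLinearMap.comp_apply,
        ContinuousLinearMap.coe_restrictScalars', hM10, hM01,
        ContinuousLinearMap.smulRight_apply, ContinuousLinearMap.one_apply,
        Complex.imCLM_apply, Complex.reCLM_apply, smul_eq_mul]
      simp [Complex.mul_im, Complex.mul_re]
end
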